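/- arXiv:1703.06379 — 5 statements merged into one kernel-verified Lean document; each statement's English description precedes it below -/
import Mathlib

section
/- Let L : ℝ^p → ℝ be twice continuously differentiable and let q_λ : ℝ → ℝ be differentiable and even with q_λ(0) = 0 and, for all t < t', −ζ₋ ≤ (q'_λ(t') − q'_λ(t))/(t'−t) ≤ −ζ₊ ≤ 0 for constants ζ₋, ζ₊ ≥ 0. Set L̃_λ(γ) = L(γ) + Σ_{j=1}^p q_λ(γ_j). Suppose γ̂ and γ̂_O in ℝ^p satisfy the stationarity conditions ∇L̃_λ(γ̂) + λ·ξ̂ = 0 and ∇L̃_λ(γ̂_O) + λ·ξ_O = 0 for some ξ̂ ∈ ∂‖γ̂‖₁ and ξ_O ∈ ∂‖γ̂_O‖₁, with λ > 0. Suppose ‖γ̂ − γ̂_O‖₀ ≤ 2s* and that there is ρ₋ > ζ₋ such that vᵀ∇²L(γ)·v ≥ ρ₋·‖v‖₂² for every v ∈ ℝ^p with ‖v‖₀ ≤ 2s* and every γ on the line segment joining γ̂ and γ̂_O. Then γ̂ = γ̂_O. -/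
open MeasureTheory ProbabilityTheory Real BigOperators Finset
open scoped ENNReal Classical

noncomputable section

def dotp {p : ℕ} (v w : Fin p → ℝ) : ℝ := ∑ k, v k * w k

def suppSet {p : ℕ} (v : Fin p → ℝ) : Finset (Fin p) :=
  Finset.univ.filter (fun k => v k ≠ 0)

def l0norm {p : ℕ} (v : Fin p → ℝ) : ℕ := (suppSet v).card

def l1norm {p : ℕ} (v : Fin p → ℝ) : ℝ := ∑ k, |v k|

def l2sq {p : ℕ} (v : Fin p → ℝ) : ℝ := ∑ k, (v k) ^ 2

def linf {p : ℕ} (v : Fin p → ℝ) : ℝ := ⨆ k, |v k|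

/-- `ψ'(t) = eᵗ/(1+eᵗ)`, the logistic function. -/
def psiD (t : ℝ) : ℝ := Real.exp t / (1 + Real.exp t)

/-- `ψ''(t) = eᵗ/(1+eᵗ)²`. -/
def psiD2 (t : ℝ) : ℝ := Real.exp t / (1 + Real.exp t) ^ 2

/-- The pairwise pseudo log-likelihood. -/
def pairLoss {n p : ℕ} (Y : Fin n → ℝ) (X : Fin n → Fin p → ℝ) (γ : Fin p → ℝ) : ℝ :=
  (2 / ((n : ℝ) * ((n : ℝ) - 1))) *
    ∑ i : Fin n, ∑ j : Fin n,
      if i < j then Real.log (1 + Real.exp (-((Y i - Y j) * dotp (fun k => X i k - X j k) γ))) else 0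

/-- Gradient of the pairwise pseudo log-likelihood. -/
def pairGrad {n p : ℕ} (Y : Fin n → ℝ) (X : Fin n → Fin p → ℝ) (γ : Fin p → ℝ) : Fin p → ℝ :=
  fun a => (2 / ((n : ℝ) * ((n : ℝ) - 1))) *
    ∑ i : Fin n, ∑ j : Fin n,
      if i < j then
        (psiD ((Y i - Y j) * dotp (fun k => X i k - X j k) γ) - 1) * (Y i - Y j) * (X i a - X j a)
      else 0

/-- Hessian of the pairwise pseudo log-likelihood. -/
def pairHess {n p : ℕ} (Y : Fin n → ℝ) (X : Fin n → Fin p → ℝ) (γ : Fin p → ℝ) :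
    Matrix (Fin p) (Fin p) ℝ :=
  Matrix.of fun a b => (2 / ((n : ℝ) * ((n : ℝ) - 1))) *
    ∑ i : Fin n, ∑ j : Fin n,
      if i < j then
        psiD2 ((Y i - Y j) * dotp (fun k => X i k - X j k) γ) * (Y i - Y j) ^ 2 *
          (X i a - X j a) * (X i b - X j b)
      else 0

/-- Smallest `s`-sparse eigenvalue. -/
def rhoMinus {p : ℕ} (M : Matrix (Fin p) (Fin p) ℝ) (s : ℕ) : ℝ :=
  sInf {r | ∃ v : Fin p → ℝ, l0norm v ≤ s ∧ l2sq v = 1 ∧ r = dotp v (M.mulVec v)}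

/-- Largest `s`-sparse eigenvalue. -/
def rhoPlus {p : ℕ} (M : Matrix (Fin p) (Fin p) ℝ) (s : ℕ) : ℝ :=
  sSup {r | ∃ v : Fin p → ℝ, l0norm v ≤ s ∧ l2sq v = 1 ∧ r = dotp v (M.mulVec v)}

/-- Matrix `L∞` operator norm: maximal absolute row sum. -/
def matLinf {ι : Type*} [Fintype ι] (A : Matrix ι ι ℝ) : ℝ := ⨆ i, ∑ j, |A i j|

/-- Elementwise supremum norm of a matrix. -/
def matSup {ι κ : Type*} [Fintype ι] [Fintype κ] (A : Matrix ι κ ℝ) : ℝ := ⨆ i, ⨆ j, |A i j|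

/-- `‖(M_SS)⁻¹‖_{L∞}` : L∞ norm of the inverse of the S×S submatrix. -/
def subInvLinf {p : ℕ} (A : Matrix (Fin p) (Fin p) ℝ) (S : Finset (Fin p)) : ℝ :=
  matLinf ((A.submatrix (fun i : {k : Fin p // k ∈ S} => (i : Fin p))
    (fun j : {k : Fin p // k ∈ S} => (j : Fin p)))⁻¹)

/-- ξ is a subgradient of the ℓ1 norm at γ. -/
def L1Subgrad {p : ℕ} (ξ γ : Fin p → ℝ) : Prop :=
  (∀ j, γ j ≠ 0 → ξ j = Real.sign (γ j)) ∧ (∀ j, γ j = 0 → |ξ j| ≤ 1)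

/-- Sub-exponential conditional tail: `P(|Y| ≥ δ | X) ≤ c1 exp(-c2 δ)` a.s., for all δ > 0. -/
def CondTail {Ω : Type*} [MeasurableSpace Ω] (P : Measure Ω) {p : ℕ}
    (Yv : Ω → ℝ) (Xv : Ω → Fin p → ℝ) (c1 c2 : ℝ) : Prop :=
  ∀ δ : ℝ, 0 < δ →
    ∀ᵐ ω ∂P,
      (P[Set.indicator {ω' | δ ≤ |Yv ω'|} (fun _ => (1 : ℝ)) |
          MeasurableSpace.comap Xv inferInstance]) ω ≤ c1 * Real.exp (-c2 * δ)

/-- Normalizing constant of the exponential tilt model. -/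
def tiltZ {p : ℕ} (μ : Measure ℝ) (g : ℝ → ℝ) (γ : Fin p → ℝ) (x : Fin p → ℝ) : ℝ :=
  ∫ y, g y * Real.exp (y * dotp x γ) ∂μ

/-- Exponential-tilt sampling model: the conditional law of `Y` given `X = x` has density
`y ↦ g(y) exp(y xᵀγ*)/Z(x)` with respect to `μ`. -/
def IsTiltModel {Ω : Type*} [MeasurableSpace Ω] {p : ℕ} (P : Measure Ω)
    (Yv : Ω → ℝ) (Xv : Ω → Fin p → ℝ) (μ : Measure ℝ) (g : ℝ → ℝ) (γs : Fin p → ℝ) : Prop :=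
  Measurable Yv ∧ Measurable Xv ∧ Measurable g ∧ (∀ y, 0 ≤ g y) ∧
  (∀ x : Fin p → ℝ, Integrable (fun y => g y * Real.exp (y * dotp x γs)) μ ∧
    0 < tiltZ μ g γs x) ∧
  Measure.map (fun ω => (Yv ω, Xv ω)) P =
    (Measure.map Xv P).bind (fun x =>
      Measure.map (fun y => (y, x))
        (μ.withDensity fun y => ENNReal.ofReal (g y * Real.exp (y * dotp x γs) / tiltZ μ g γs x)))

/-- Regularity conditions (a)–(d) for the penalty family `pλ(t) = pen λ t`, with
`q_λ(t) = pλ(|t|) − λ|t|` having derivative `qd λ`. -/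
def PenaltyFamily (pen : ℝ → ℝ → ℝ) (qd : ℝ → ℝ → ℝ) (ζm ζp : ℝ) : Prop :=
  (∀ lam t, 0 ≤ t → 0 ≤ pen lam t) ∧
  (∀ lam, pen lam 0 = 0) ∧
  (∀ lam t, HasDerivAt (fun u : ℝ => pen lam |u| - lam * |u|) (qd lam t) t) ∧
  0 ≤ ζp ∧ 0 ≤ ζm ∧
  (∀ lam t t' : ℝ, t < t' →
    -ζm ≤ (qd lam t' - qd lam t) / (t' - t) ∧ (qd lam t' - qd lam t) / (t' - t) ≤ -ζp) ∧
  (∀ lam t, |qd lam t| ≤ lam) ∧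
  (∀ lam, qd lam 0 = 0) ∧
  (∀ lam1 lam2 t, |qd lam1 t - qd lam2 t| ≤ |lam1 - lam2|)

/-- Regularity conditions (e)–(f) for the penalty at a given `λ`:
`p'_λ(t) = q'_λ(t) + λ ≥ c7 λ` on `(0, c8 λ]` and `p'_λ(t) = 0` for `t > ν`. -/
def PenaltyAt (qd : ℝ → ℝ → ℝ) (lam c7 c8 ν : ℝ) : Prop :=
  0 ≤ c7 ∧ c7 ≤ 1 ∧ 0 < c8 ∧
  (∀ t : ℝ, 0 < t → t ≤ c8 * lam → c7 * lam ≤ qd lam t + lam) ∧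
  (∀ t : ℝ, ν < t → qd lam t + lam = 0)


/-- Expansion of a continuous linear functional on `Fin p → ℝ` in coordinates. -/
lemma clm_expand {p : ℕ} (f : (Fin p → ℝ) →L[ℝ] ℝ) (v : Fin p → ℝ) :
    f v = ∑ k, v k * f (Pi.single k 1) := by
  have hv : v = ∑ k, v k • (Pi.single k 1 : Fin p → ℝ) := by
    ext j
    simp [Finset.sum_apply, Pi.single_apply]
  conv_lhs => rw [hv]
  rw [map_sum]
  simp [smul_eq_mul]

/-- Subgradient facts: `ξ k * γ k = |γ k|` and `|ξ k| ≤ 1`. -/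
lemma l1subgrad_facts {p : ℕ} {ξ γ : Fin p → ℝ} (h : L1Subgrad ξ γ) (k : Fin p) :
    ξ k * γ k = |γ k| ∧ |ξ k| ≤ 1 := by
  rcases eq_or_ne (γ k) 0 with h0 | h0
  · refine ⟨by simp [h0], h.2 k h0⟩
  · have hs := h.1 k h0
    rcases lt_trichotomy (γ k) 0 with hlt | heq | hgt
    · rw [hs, Real.sign_of_neg hlt]
      constructor
      · rw [abs_of_neg hlt]; ring
      · simp
    · exact absurd heq h0
    · rw [hs, Real.sign_of_pos hgt]
      constructor
      · rw [abs_of_pos hgt]; ring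
      · simp

set_option maxHeartbeats 1000000 in
/-- if `γ̂` and `γ̂_O` both satisfy the stationarity condition
`∇L̃_λ(·) + λξ = 0` for subgradients `ξ` of the ℓ1 norm (with
`L̃_λ(γ) = L(γ) + Σⱼ q_λ(γⱼ)`), `‖γ̂ − γ̂_O‖₀ ≤ 2s*`, and the Hessian of `L` is bounded
below by `ρ₋ > ζ₋` on `2s*`-sparse directions along the segment joining them, then
`γ̂ = γ̂_O`. -/
theorem stmt_1 {p : ℕ} (L : (Fin p → ℝ) → ℝ) (hL : ContDiff ℝ 2 L)
    (qlam : ℝ → ℝ) (qd : ℝ → ℝ) (hqd : ∀ t, HasDerivAt qlam (qd t) t)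
    (hq0 : qlam 0 = 0) (hqeven : ∀ t, qlam (-t) = qlam t)
    (ζm ζp : ℝ) (hζm : 0 ≤ ζm) (hζp : 0 ≤ ζp)
    (hconc : ∀ t t' : ℝ, t < t' →
      -ζm ≤ (qd t' - qd t) / (t' - t) ∧ (qd t' - qd t) / (t' - t) ≤ -ζp)
    (lam : ℝ) (hlam : 0 < lam)
    (γhat γO ξhat ξO : Fin p → ℝ)
    (hξhat : L1Subgrad ξhat γhat) (hξO : L1Subgrad ξO γO)
    (hstat1 : ∀ k, fderiv ℝ L γhat (Pi.single k 1) + qd (γhat k) + lam * ξhat k = 0)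
    (hstat2 : ∀ k, fderiv ℝ L γO (Pi.single k 1) + qd (γO k) + lam * ξO k = 0)
    (sstar : ℕ) (hsparse : l0norm (fun k => γhat k - γO k) ≤ 2 * sstar)
    (ρm : ℝ) (hρζ : ζm < ρm)
    (hcurv : ∀ v : Fin p → ℝ, l0norm v ≤ 2 * sstar → ∀ t ∈ Set.Icc (0 : ℝ) 1,
      ρm * l2sq v ≤ fderiv ℝ (fderiv ℝ L) (γO + t • (γhat - γO)) v v) :
    γhat = γO := by
  by_contra hne
  set v : Fin p → ℝ := γhat - γO with hvdef
  have hvk : ∀ k, v k = γhat k - γO k := fun k => by simp [hvdef]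
  -- v ≠ 0 at some coordinate
  obtain ⟨k0, hk0⟩ := Function.ne_iff.mp hne
  have hvk0 : v k0 ≠ 0 := sub_ne_zero.mpr hk0
  have hl2pos : 0 < l2sq v := by
    apply Finset.sum_pos' (fun k _ => sq_nonneg _)
    exact ⟨k0, Finset.mem_univ _, by positivity⟩
  -- derivative setup
  have hLd : ContDiff ℝ 1 (fderiv ℝ L) := hL.fderiv_right (by norm_num)
  have hdiff : ∀ x, HasFDerivAt (fderiv ℝ L) (fderiv ℝ (fderiv ℝ L) x) x :=
    fun x => ((hLd.differentiable one_ne_zero) x).hasFDerivAt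
  set g : ℝ → ℝ := fun t => fderiv ℝ L (γO + t • v) v with hgdef
  have hg' : ∀ t : ℝ, HasDerivAt g (fderiv ℝ (fderiv ℝ L) (γO + t • v) v v) t := by
    intro t
    have hpath : HasDerivAt (fun s : ℝ => γO + s • v) v t := by
      simpa using (((hasDerivAt_id t).smul_const v).const_add γO)
    have hcomp : HasDerivAt (fun s : ℝ => fderiv ℝ L (γO + s • v))
        (fderiv ℝ (fderiv ℝ L) (γO + t • v) v) t :=
      (hdiff (γO + t • v)).comp_hasDerivAt t hpath
    have := hcomp.clm_apply (hasDerivAt_const t v)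
    simpa using this
  have hcont : ContinuousOn g (Set.Icc 0 1) :=
    fun x _ => ((hg' x).continuousAt).continuousWithinAt
  obtain ⟨c, hc, hceq⟩ := exists_hasDerivAt_eq_slope g
    (fun t => fderiv ℝ (fderiv ℝ L) (γO + t • v) v v) (by norm_num : (0:ℝ) < 1)
    hcont (fun x _ => hg' x)
  have hg1 : g 1 = fderiv ℝ L γhat v := by
    have h1v : γO + (1:ℝ) • v = γhat := by
      rw [one_smul, hvdef]; abel
    show fderiv ℝ L (γO + (1:ℝ) • v) v = fderiv ℝ L γhat v
    rw [h1v]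
  have hg0 : g 0 = fderiv ℝ L γO v := by simp [hgdef]
  -- curvature lower bound
  have hlow : ρm * l2sq v ≤ fderiv ℝ L γhat v - fderiv ℝ L γO v := by
    have hmem : c ∈ Set.Icc (0:ℝ) 1 := ⟨le_of_lt hc.1, le_of_lt hc.2⟩
    have := hcurv v hsparse c hmem
    rw [hceq] at this
    rw [hg1, hg0] at this
    linarith [this]
  -- stationarity upper bound
  have hup : fderiv ℝ L γhat v - fderiv ℝ L γO v ≤ ζm * l2sq v := by
    rw [clm_expand (fderiv ℝ L γhat) v, clm_expand (fderiv ℝ L γO) v,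
      ← Finset.sum_sub_distrib]
    have hterm : ∀ k ∈ Finset.univ,
        v k * fderiv ℝ L γhat (Pi.single k 1) - v k * fderiv ℝ L γO (Pi.single k 1)
          ≤ ζm * (v k) ^ 2 := by
      intro k _
      have h1 := hstat1 k
      have h2 := hstat2 k
      have e1 : fderiv ℝ L γhat (Pi.single k 1) = -qd (γhat k) - lam * ξhat k := by linarith
      have e2 : fderiv ℝ L γO (Pi.single k 1) = -qd (γO k) - lam * ξO k := by linarith
      rw [e1, e2]
      set a := γO k
      set b := γhat k
      have hvkk : v k = b - a := hvk k
      -- concavity bound on qd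
      have hqd : (qd b - qd a) * (b - a) ≥ -ζm * (b - a) ^ 2 := by
        rcases lt_trichotomy a b with hab | hab | hab
        · have := (hconc a b hab).1
          have h' : -ζm * (b - a) ≤ qd b - qd a :=
            (le_div_iff₀ (by linarith)).mp this
          nlinarith
        · simp [hab]
        · have := (hconc b a hab).1
          have h' : -ζm * (a - b) ≤ qd a - qd b :=
            (le_div_iff₀ (by linarith)).mp this
          nlinarith
      -- monotonicity of the subgradient
      have hsub : (ξhat k - ξO k) * (b - a) ≥ 0 := by
        obtain ⟨hb1, hb2⟩ := l1subgrad_facts hξhat k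
        obtain ⟨ha1, ha2⟩ := l1subgrad_facts hξO k
        have hba : ξhat k * a ≤ |a| := by
          calc ξhat k * a ≤ |ξhat k * a| := le_abs_self _
            _ = |ξhat k| * |a| := abs_mul _ _
            _ ≤ 1 * |a| := by gcongr
            _ = |a| := one_mul _
        have hab' : ξO k * b ≤ |b| := by
          calc ξO k * b ≤ |ξO k * b| := le_abs_self _
            _ = |ξO k| * |b| := abs_mul _ _
            _ ≤ 1 * |b| := by gcongr
            _ = |b| := one_mul _
        nlinarith [hb1, ha1]
      rw [hvkk]
      nlinarith [hqd, mul_nonneg hlam.le hsub]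
    calc ∑ k, (v k * fderiv ℝ L γhat (Pi.single k 1) - v k * fderiv ℝ L γO (Pi.single k 1))
        ≤ ∑ k, ζm * (v k) ^ 2 := Finset.sum_le_sum hterm
      _ = ζm * l2sq v := by rw [l2sq, Finset.mul_sum]
  nlinarith [hlow, hup, hl2pos, hρζ]
end
end

section
/- (Restricted strong convexity.) Let L : ℝ^p → ℝ be twice continuously differentiable and let q_λ : ℝ → ℝ be differentiable and even with q_λ(0) = 0 and, for all t < t', −ζ₋ ≤ (q'_λ(t') − q'_λ(t))/(t'−t) ≤ −ζ₊ ≤ 0 for constants ζ₋, ζ₊ ≥ 0. Set L̃_λ(γ) = L(γ) + Σ_{j=1}^p q_λ(γ_j). Let S ⊆ {1,…,p} with |S| = s*, and let γ₁, γ₂ ∈ ℝ^p satisfy ‖(γ₁−γ₂)_{S̄}‖₀ ≤ s*, where S̄ is the complement of S. Suppose ρ₋ ≥ 0 satisfies vᵀ∇²L(γ)·v ≥ ρ₋·‖v‖₂² for every v ∈ ℝ^p with ‖v‖₀ ≤ 2s* and every γ on the segment joining γ₁ and γ₂. Then L̃_λ(γ₂) ≥ L̃_λ(γ₁) + ∇L̃_λ(γ₁)ᵀ(γ₂−γ₁)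 + ((ρ₋ − ζ₋)/2)·‖γ₂−γ₁‖₂². -/
open MeasureTheory ProbabilityTheory Real BigOperators Finset
open scoped ENNReal Classical

noncomputable section

/-- Mean value inequality: if `g` has monotone derivative `gd`, then the tangent line lies below. -/
lemma tangent_le_aux (g gd : ℝ → ℝ) (hg : ∀ t, HasDerivAt g (gd t) t)
    (hmono : ∀ s t : ℝ, s ≤ t → gd s ≤ gd t) (a b : ℝ) :
    g a + gd a * (b - a) ≤ g b := by
  rcases lt_trichotomy a b with h | h | h
  · obtain ⟨c, hc, hceq⟩ := exists_hasDerivAt_eq_slope g gd h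
      (fun x _ => (hg x).continuousAt.continuousWithinAt) (fun x _ => hg x)
    have h1 : gd a ≤ gd c := hmono a c hc.1.le
    have hba : 0 < b - a := by linarith
    have := hceq
    have h2 : gd a * (b - a) ≤ gd c * (b - a) := by nlinarith
    rw [hceq] at h2
    rw [div_mul_cancel₀ _ (ne_of_gt hba)] at h2
    linarith
  · simp [h]
  · obtain ⟨c, hc, hceq⟩ := exists_hasDerivAt_eq_slope g gd h
      (fun x _ => (hg x).continuousAt.continuousWithinAt) (fun x _ => hg x)
    have h1 : gd c ≤ gd a := hmono c a hc.2.le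
    have hab : 0 < a - b := by linarith
    have h2 : gd c * (a - b) ≤ gd a * (a - b) := by nlinarith
    rw [hceq] at h2
    have : (g a - g b) / (a - b) * (a - b) = g a - g b := div_mul_cancel₀ _ (ne_of_gt hab)
    rw [this] at h2
    nlinarith

/-- Second-order Taylor lower bound on `[0,1]`. -/
lemma second_order_aux (f fd fdd : ℝ → ℝ) (hf : ∀ t, HasDerivAt f (fd t) t)
    (hfd : ∀ t, HasDerivAt fd (fdd t) t) (c : ℝ)
    (hc : ∀ t ∈ Set.Icc (0 : ℝ) 1, c ≤ fdd t) :
    f 0 + fd 0 + c / 2 ≤ f 1 := by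
  -- Step 1: fd 0 + c * t ≤ fd t on [0,1]
  have step1 : ∀ t ∈ Set.Icc (0 : ℝ) 1, fd 0 + c * t ≤ fd t := by
    intro t ht
    rcases eq_or_lt_of_le ht.1 with h | h
    · simp [← h]
    · obtain ⟨ξ, hξ, hξeq⟩ := exists_hasDerivAt_eq_slope fd fdd h
        (fun x _ => (hfd x).continuousAt.continuousWithinAt) (fun x _ => hfd x)
      have hξmem : ξ ∈ Set.Icc (0 : ℝ) 1 := ⟨hξ.1.le, hξ.2.le.trans ht.2⟩
      have h1 : c ≤ fdd ξ := hc ξ hξmem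
      have ht0 : 0 < t := h
      have h2 : c * t ≤ fdd ξ * t := by nlinarith
      rw [hξeq] at h2
      have : (fd t - fd 0) / (t - 0) * t = fd t - fd 0 := by
        rw [sub_zero]; exact div_mul_cancel₀ _ (ne_of_gt ht0)
      rw [this] at h2
      linarith
  -- Step 2: apply MVT to h t = f t - fd 0 * t - c/2 * t^2 on [0,1]
  set h : ℝ → ℝ := fun t => f t - fd 0 * t - c / 2 * t ^ 2 with hh
  have hh' : ∀ t, HasDerivAt h (fd t - fd 0 - c * t) t := by
    intro t
    have h1 : HasDerivAt (fun t : ℝ => fd 0 * t) (fd 0) t := by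
      simpa using (hasDerivAt_id t).const_mul (fd 0)
    have h2 : HasDerivAt (fun t : ℝ => c / 2 * t ^ 2) (c / 2 * (2 * t)) t := by
      have := (hasDerivAt_pow 2 t).const_mul (c / 2)
      simpa [mul_comm] using this
    have := ((hf t).sub h1).sub h2
    exact this.congr_deriv (by ring)
  obtain ⟨ξ, hξ, hξeq⟩ := exists_hasDerivAt_eq_slope (a := 0) (b := 1) h
      (fun t => fd t - fd 0 - c * t)
      (by norm_num) (fun x _ => (hh' x).continuousAt.continuousWithinAt) (fun x _ => hh' x)
  have hξmem : ξ ∈ Set.Icc (0 : ℝ) 1 := ⟨hξ.1.le, hξ.2.le⟩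
  have h1 : 0 ≤ fd ξ - fd 0 - c * ξ := by have := step1 ξ hξmem; linarith
  rw [hξeq] at h1
  have : h 1 - h 0 ≥ 0 := by
    have : (h 1 - h 0) / (1 - 0) = h 1 - h 0 := by norm_num
    rw [this] at h1; linarith
  simp only [hh] at this
  nlinarith

/-- restricted strong convexity: with `L̃_λ(γ) = L(γ) + Σⱼ q_λ(γⱼ)`, if the
Hessian quadratic form of `L` is bounded below by `ρ₋` on `2s*`-sparse directions along the
segment joining `γ₁` and `γ₂`, and `‖(γ₁−γ₂)_{S̄}‖₀ ≤ s*`, then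
`L̃_λ(γ₂) ≥ L̃_λ(γ₁) + ∇L̃_λ(γ₁)ᵀ(γ₂−γ₁) + ((ρ₋−ζ₋)/2)‖γ₂−γ₁‖₂²`. -/
theorem stmt_3 {p : ℕ} (L : (Fin p → ℝ) → ℝ) (hL : ContDiff ℝ 2 L)
    (qlam : ℝ → ℝ) (qd : ℝ → ℝ) (hqd : ∀ t, HasDerivAt qlam (qd t) t)
    (hq0 : qlam 0 = 0) (hqeven : ∀ t, qlam (-t) = qlam t)
    (ζm ζp : ℝ) (hζm : 0 ≤ ζm) (hζp : 0 ≤ ζp)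
    (hconc : ∀ t t' : ℝ, t < t' →
      -ζm ≤ (qd t' - qd t) / (t' - t) ∧ (qd t' - qd t) / (t' - t) ≤ -ζp)
    (S : Finset (Fin p)) (sstar : ℕ) (hS : S.card = sstar)
    (γ₁ γ₂ : Fin p → ℝ)
    (hsparse : (Finset.univ.filter (fun k => k ∉ S ∧ γ₁ k - γ₂ k ≠ 0)).card ≤ sstar)
    (ρm : ℝ) (hρm : 0 ≤ ρm)
    (hRSC : ∀ v : Fin p → ℝ, l0norm v ≤ 2 * sstar → ∀ t ∈ Set.Icc (0 : ℝ) 1,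
      ρm * l2sq v ≤ fderiv ℝ (fderiv ℝ L) (γ₁ + t • (γ₂ - γ₁)) v v) :
    L γ₁ + (∑ j, qlam (γ₁ j))
        + (fderiv ℝ L γ₁ (γ₂ - γ₁) + ∑ j, qd (γ₁ j) * (γ₂ j - γ₁ j))
        + (ρm - ζm) / 2 * l2sq (fun k => γ₂ k - γ₁ k)
      ≤ L γ₂ + ∑ j, qlam (γ₂ j) := by
  classical
  set w : Fin p → ℝ := γ₂ - γ₁ with hw
  have hwk : ∀ k, w k = γ₂ k - γ₁ k := fun k => rfl
  -- penalty part
  have hmono : ∀ s t : ℝ, s ≤ t → qd s + ζm * s ≤ qd t + ζm * t := by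
    intro s t hst
    rcases eq_or_lt_of_le hst with h | h
    · rw [h]
    · have h1 := (hconc s t h).1
      have hts : 0 < t - s := by linarith
      have : -ζm * (t - s) ≤ (qd t - qd s) / (t - s) * (t - s) := by nlinarith
      rw [div_mul_cancel₀ _ (ne_of_gt hts)] at this
      nlinarith
  have hpen : ∀ j : Fin p,
      qlam (γ₁ j) + qd (γ₁ j) * (γ₂ j - γ₁ j) - ζm / 2 * (γ₂ j - γ₁ j) ^ 2 ≤ qlam (γ₂ j) := by
    intro j
    have hg : ∀ t, HasDerivAt (fun t => qlam t + ζm / 2 * t ^ 2) (qd t + ζm * t) t := by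
      intro t
      have h2 : HasDerivAt (fun t : ℝ => ζm / 2 * t ^ 2) (ζm / 2 * (2 * t)) t := by
        simpa using (hasDerivAt_pow 2 t).const_mul (ζm / 2)
      have := (hqd t).add h2
      exact this.congr_deriv (by ring)
    have := tangent_le_aux _ _ hg hmono (γ₁ j) (γ₂ j)
    nlinarith [this]
  have hpensum :
      (∑ j, qlam (γ₁ j)) + (∑ j, qd (γ₁ j) * (γ₂ j - γ₁ j))
        - ζm / 2 * l2sq (fun k => γ₂ k - γ₁ k) ≤ ∑ j, qlam (γ₂ j) := by
    have := Finset.sum_le_sum (fun j (_ : j ∈ Finset.univ) => hpen j)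
    simp only [Finset.sum_sub_distrib, Finset.sum_add_distrib] at this
    rw [l2sq, Finset.mul_sum]
    convert this using 2
  -- L part
  have hLdiff : Differentiable ℝ L := hL.differentiable (by norm_num)
  have hL1 : ContDiff ℝ 1 (fderiv ℝ L) := hL.fderiv_right (by norm_num)
  have hline : ∀ t : ℝ, HasDerivAt (fun t : ℝ => γ₁ + t • w) w t := by
    intro t
    have : HasDerivAt (fun t : ℝ => t • w) ((1 : ℝ) • w) t :=
      (hasDerivAt_id t).smul_const w
    simpa using this.const_add γ₁
  have hφd : ∀ t : ℝ, HasDerivAt (fun t => L (γ₁ + t • w)) (fderiv ℝ L (γ₁ + t • w) w) t := by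
    intro t
    exact ((hLdiff (γ₁ + t • w)).hasFDerivAt).comp_hasDerivAt t (hline t)
  have hφdd : ∀ t : ℝ, HasDerivAt (fun t => fderiv ℝ L (γ₁ + t • w) w)
      (fderiv ℝ (fderiv ℝ L) (γ₁ + t • w) w w) t := by
    intro t
    have h1 : HasDerivAt (fun t : ℝ => fderiv ℝ L (γ₁ + t • w))
        (fderiv ℝ (fderiv ℝ L) (γ₁ + t • w) w) t :=
      ((hL1.differentiable one_ne_zero (γ₁ + t • w)).hasFDerivAt).comp_hasDerivAt t (hline t)
    have := h1.clm_apply (hasDerivAt_const t w)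
    simpa using this
  -- sparsity of w
  have hl0 : l0norm w ≤ 2 * sstar := by
    have hsub : suppSet w ⊆ S ∪ Finset.univ.filter (fun k => k ∉ S ∧ γ₁ k - γ₂ k ≠ 0) := by
      intro k hk
      simp only [suppSet, Finset.mem_filter, Finset.mem_univ, true_and] at hk
      by_cases hkS : k ∈ S
      · exact Finset.mem_union_left _ hkS
      · refine Finset.mem_union_right _ ?_
        simp only [Finset.mem_filter, Finset.mem_univ, true_and]
        refine ⟨hkS, ?_⟩
        intro hc
        apply hk
        rw [hwk]
        linarith [hc]
      -- done
    calc l0norm w ≤ (S ∪ Finset.univ.filter (fun k => k ∉ S ∧ γ₁ k - γ₂ k ≠ 0)).card :=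
          Finset.card_le_card hsub
      _ ≤ S.card + (Finset.univ.filter (fun k => k ∉ S ∧ γ₁ k - γ₂ k ≠ 0)).card :=
          Finset.card_union_le _ _
      _ ≤ sstar + sstar := by rw [hS]; exact Nat.add_le_add_left hsparse _
      _ = 2 * sstar := by ring
  have hLpart := second_order_aux (fun t => L (γ₁ + t • w)) _ _ hφd hφdd
      (ρm * l2sq w) (fun t ht => hRSC w hl0 t ht)
  simp only [zero_smul, add_zero, one_smul] at hLpart
  have hγ2 : γ₁ + w = γ₂ := by
    funext k; simp [hwk]
  rw [hγ2] at hLpart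
  have hl2 : l2sq w = l2sq (fun k => γ₂ k - γ₁ k) := by
    unfold l2sq; congr 1
  rw [hl2] at hLpart
  have hw' : (γ₂ - γ₁ : Fin p → ℝ) = w := rfl
  rw [hw'] at *
  linarith [hpensum, hLpart]
end
end

section
/- (Restricted strong smoothness.) Let L : ℝ^p → ℝ be twice continuously differentiable and let q_λ : ℝ → ℝ be differentiable and even with q_λ(0) = 0 and, for all t < t', −ζ₋ ≤ (q'_λ(t') − q'_λ(t))/(t'−t) ≤ −ζ₊ ≤ 0 for constants ζ₋, ζ₊ ≥ 0. Set L̃_λ(γ) = L(γ) + Σ_{j=1}^p q_λ(γ_j). Let S ⊆ {1,…,p} with |S| = s*, and let γ₁, γ₂ ∈ ℝ^p satisfy ‖(γ₁−γ₂)_{S̄}‖₀ ≤ s*, where S̄ is the complement of S. Suppose ρ₊ ≥ 0 satisfies vᵀ∇²L(γ)·v ≤ ρ₊·‖v‖₂² for every v ∈ ℝ^p with ‖v‖₀ ≤ 2s* and every γ on the segment joining γ₁ and γ₂. Then L̃_λ(γ₂) ≤ L̃_λ(γ₁) + ∇L̃_λ(γ₁)ᵀ(γ₂−γ₁) + ((ρ₊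 − ζ₊)/2)·‖γ₂−γ₁‖₂². -/
open MeasureTheory ProbabilityTheory Real BigOperators Finset
open scoped ENNReal Classical

noncomputable section

lemma sqder (C x : ℝ) (a : ℝ) : HasDerivAt (fun x : ℝ => C / 2 * (x - a) ^ 2) (C * (x - a)) x := by
  have := (((hasDerivAt_id x).sub_const a).pow 2).const_mul (C / 2)
  refine this.congr_deriv ?_
  simp [id]; ring

lemma oneD_aux (g g' : ℝ → ℝ) (hg : ∀ t, HasDerivAt g (g' t) t) (C : ℝ)
    (hs : ∀ x y : ℝ, x < y → g' y - g' x ≤ C * (y - x)) (a b : ℝ) :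
    g b ≤ g a + g' a * (b - a) + C / 2 * (b - a) ^ 2 := by
  set φ : ℝ → ℝ := fun x => g x - g' a * (x - a) - C / 2 * (x - a) ^ 2 with hφ
  have hφd : ∀ x, HasDerivAt φ (g' x - g' a - C * (x - a)) x := by
    intro x
    have h1 : HasDerivAt (fun x : ℝ => g' a * (x - a)) (g' a) x := by
      simpa using ((hasDerivAt_id x).sub_const a).const_mul (g' a)
    simpa [Pi.sub_def] using ((hg x).sub h1).sub (sqder C x a)
  have hdiff : Differentiable ℝ φ := fun x => (hφd x).differentiableAt
  have key : φ b ≤ φ a := by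
    rcases le_or_gt a b with hab | hab
    · have hmono : AntitoneOn φ (Set.Ici a) := by
        apply antitoneOn_of_deriv_nonpos (convex_Ici a) hdiff.continuous.continuousOn
        · exact fun x hx => (hφd x).differentiableAt.differentiableWithinAt
        · intro x hx
          rw [(hφd x).deriv]
          rw [interior_Ici] at hx
          have := hs a x hx
          nlinarith
      exact hmono (Set.self_mem_Ici) hab hab
    · have hmono : MonotoneOn φ (Set.Iic a) := by
        apply monotoneOn_of_deriv_nonneg (convex_Iic a) hdiff.continuous.continuousOn
        · exact fun x hx => (hφd x).differentiableAt.differentiableWithinAt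
        · intro x hx
          rw [(hφd x).deriv]
          rw [interior_Iic] at hx
          have := hs x a hx
          nlinarith
      exact hmono hab.le (Set.self_mem_Iic) hab.le
  simp only [hφ] at key
  nlinarith [key]

lemma oneD01_aux (f f' f'' : ℝ → ℝ) (hf : ∀ t, HasDerivAt f (f' t) t)
    (hf' : ∀ t, HasDerivAt f' (f'' t) t) (C : ℝ)
    (hC : ∀ t ∈ Set.Icc (0 : ℝ) 1, f'' t ≤ C) : f 1 ≤ f 0 + f' 0 + C / 2 := by
  have hψ : ∀ t ∈ Set.Icc (0:ℝ) 1, f' t ≤ f' 0 + C * t := by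
    have hψd : ∀ x : ℝ, HasDerivAt (fun t => f' t - C * t) (f'' x - C) x := by
      intro x
      simpa [Pi.sub_def] using (hf' x).sub ((hasDerivAt_id x).const_mul C)
    have hdiff : Differentiable ℝ (fun t => f' t - C * t) := fun x => (hψd x).differentiableAt
    have hmono : AntitoneOn (fun t => f' t - C * t) (Set.Icc (0:ℝ) 1) := by
      apply antitoneOn_of_deriv_nonpos (convex_Icc 0 1) hdiff.continuous.continuousOn
      · exact fun x hx => (hψd x).differentiableAt.differentiableWithinAt
      · intro x hx
        rw [(hψd x).deriv]
        rw [interior_Icc] at hx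
        have := hC x ⟨hx.1.le, hx.2.le⟩
        linarith
    intro t ht
    have := hmono (Set.left_mem_Icc.2 zero_le_one) ht ht.1
    simp only at this
    linarith
  have hφd : ∀ x : ℝ, HasDerivAt (fun t => f t - f' 0 * t - C / 2 * t ^ 2)
      (f' x - f' 0 - C * x) x := by
    intro x
    have h2 := sqder C x 0
    simp only [sub_zero] at h2
    simpa [Pi.sub_def] using ((hf x).sub ((hasDerivAt_id x).const_mul (f' 0))).sub h2
  have hdiff : Differentiable ℝ (fun t => f t - f' 0 * t - C / 2 * t ^ 2) :=
    fun x => (hφd x).differentiableAt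
  have hmono : AntitoneOn (fun t => f t - f' 0 * t - C / 2 * t ^ 2) (Set.Icc (0:ℝ) 1) := by
    apply antitoneOn_of_deriv_nonpos (convex_Icc 0 1) hdiff.continuous.continuousOn
    · exact fun x hx => (hφd x).differentiableAt.differentiableWithinAt
    · intro x hx
      rw [(hφd x).deriv]
      rw [interior_Icc] at hx
      have := hψ x ⟨hx.1.le, hx.2.le⟩
      linarith
  have := hmono (Set.left_mem_Icc.2 zero_le_one) (Set.right_mem_Icc.2 zero_le_one) zero_le_one
  simp only at this
  nlinarith [this]

/-- restricted strong smoothness: with `L̃_λ(γ) = L(γ) + Σⱼ q_λ(γⱼ)`, if the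
Hessian quadratic form of `L` is bounded above by `ρ₊` on `2s*`-sparse directions along the
segment joining `γ₁` and `γ₂`, and `‖(γ₁−γ₂)_{S̄}‖₀ ≤ s*`, then
`L̃_λ(γ₂) ≤ L̃_λ(γ₁) + ∇L̃_λ(γ₁)ᵀ(γ₂−γ₁) + ((ρ₊−ζ₊)/2)‖γ₂−γ₁‖₂²`. -/
theorem stmt_4 {p : ℕ} (L : (Fin p → ℝ) → ℝ) (hL : ContDiff ℝ 2 L)
    (qlam : ℝ → ℝ) (qd : ℝ → ℝ) (hqd : ∀ t, HasDerivAt qlam (qd t) t)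
    (hq0 : qlam 0 = 0) (hqeven : ∀ t, qlam (-t) = qlam t)
    (ζm ζp : ℝ) (hζm : 0 ≤ ζm) (hζp : 0 ≤ ζp)
    (hconc : ∀ t t' : ℝ, t < t' →
      -ζm ≤ (qd t' - qd t) / (t' - t) ∧ (qd t' - qd t) / (t' - t) ≤ -ζp)
    (S : Finset (Fin p)) (sstar : ℕ) (hS : S.card = sstar)
    (γ₁ γ₂ : Fin p → ℝ)
    (hsparse : (Finset.univ.filter (fun k => k ∉ S ∧ γ₁ k - γ₂ k ≠ 0)).card ≤ sstar)
    (ρp : ℝ) (hρp : 0 ≤ ρp)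
    (hRSS : ∀ v : Fin p → ℝ, l0norm v ≤ 2 * sstar → ∀ t ∈ Set.Icc (0 : ℝ) 1,
      fderiv ℝ (fderiv ℝ L) (γ₁ + t • (γ₂ - γ₁)) v v ≤ ρp * l2sq v) :
    L γ₂ + ∑ j, qlam (γ₂ j)
      ≤ L γ₁ + (∑ j, qlam (γ₁ j))
        + (fderiv ℝ L γ₁ (γ₂ - γ₁) + ∑ j, qd (γ₁ j) * (γ₂ j - γ₁ j))
        + (ρp - ζp) / 2 * l2sq (fun k => γ₂ k - γ₁ k) := by
    classical
  set v : Fin p → ℝ := γ₂ - γ₁ with hv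
  -- sparsity of v
  have hl0 : l0norm v ≤ 2 * sstar := by
    have hsub : suppSet v ⊆ S ∪ (Finset.univ.filter (fun k => k ∉ S ∧ γ₁ k - γ₂ k ≠ 0)) := by
      intro k hk
      simp only [suppSet, Finset.mem_filter, Finset.mem_univ, true_and] at hk
      by_cases hkS : k ∈ S
      · exact Finset.mem_union_left _ hkS
      · refine Finset.mem_union_right _ ?_
        simp only [Finset.mem_filter, Finset.mem_univ, true_and]
        refine ⟨hkS, ?_⟩
        intro h
        apply hk
        have : γ₂ k - γ₁ k = 0 := by
          have := sub_eq_zero.mp h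
          simp [sub_eq_zero, this]
        simpa [hv] using this
    calc l0norm v ≤ (S ∪ _).card := Finset.card_le_card hsub
      _ ≤ S.card + _ := Finset.card_union_le _ _
      _ ≤ sstar + sstar := add_le_add hS.le hsparse
      _ = 2 * sstar := by ring
  -- the line
  set γline : ℝ → (Fin p → ℝ) := fun t => γ₁ + t • v with hγline
  have hγd : ∀ t : ℝ, HasDerivAt γline v t := by
    intro t
    have : HasDerivAt (fun t : ℝ => t • v) ((1:ℝ) • v) t :=
      (hasDerivAt_id t).smul_const v
    simpa [hγline] using this.const_add γ₁
  have hLd : Differentiable ℝ L := hL.differentiable (by norm_num)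
  have hFd : Differentiable ℝ (fderiv ℝ L) :=
    (hL.fderiv_right (m := 1) (by norm_num)).differentiable (by norm_num)
  have hf : ∀ t : ℝ, HasDerivAt (fun t => L (γline t)) (fderiv ℝ L (γline t) v) t := by
    intro t
    exact (hLd (γline t)).hasFDerivAt.comp_hasDerivAt t (hγd t)
  have hf' : ∀ t : ℝ, HasDerivAt (fun t => fderiv ℝ L (γline t) v)
      (fderiv ℝ (fderiv ℝ L) (γline t) v v) t := by
    intro t
    have hc : HasDerivAt (fun t => fderiv ℝ L (γline t))
        (fderiv ℝ (fderiv ℝ L) (γline t) v) t :=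
      (hFd (γline t)).hasFDerivAt.comp_hasDerivAt t (hγd t)
    simpa using hc.clm_apply (hasDerivAt_const t v)
  -- Taylor bound for L
  have hLbound : L (γline 1) ≤ L (γline 0) + fderiv ℝ L (γline 0) v + ρp * l2sq v / 2 := by
    have := oneD01_aux (fun t => L (γline t)) (fun t => fderiv ℝ L (γline t) v)
      (fun t => fderiv ℝ (fderiv ℝ L) (γline t) v v) hf hf' (ρp * l2sq v)
      (fun t ht => hRSS v hl0 t ht)
    linarith
  have hγ0 : γline 0 = γ₁ := by simp [hγline]
  have hγ1 : γline 1 = γ₂ := by simp [hγline, hv]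
  rw [hγ0, hγ1] at hLbound
  -- penalty bound per coordinate
  have hq : ∀ j : Fin p, qlam (γ₂ j) ≤ qlam (γ₁ j) + qd (γ₁ j) * (γ₂ j - γ₁ j)
      + (-ζp) / 2 * (γ₂ j - γ₁ j) ^ 2 := by
    intro j
    refine oneD_aux qlam qd hqd (-ζp) ?_ (γ₁ j) (γ₂ j)
    intro x y hxy
    have h := (hconc x y hxy).2
    have hpos : 0 < y - x := by linarith
    calc qd y - qd x = (qd y - qd x) / (y - x) * (y - x) := by
          field_simp
      _ ≤ -ζp * (y - x) := by
          apply mul_le_mul_of_nonneg_right h hpos.le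
  have hqsum : ∑ j, qlam (γ₂ j) ≤ ∑ j, qlam (γ₁ j) + ∑ j, qd (γ₁ j) * (γ₂ j - γ₁ j)
      + (-ζp) / 2 * l2sq (fun k => γ₂ k - γ₁ k) := by
    have h := Finset.sum_le_sum (fun j (_ : j ∈ Finset.univ) => hq j)
    rw [Finset.sum_add_distrib, Finset.sum_add_distrib, ← Finset.mul_sum] at h
    rw [l2sq]
    linarith
  have hl2 : l2sq v = l2sq (fun k => γ₂ k - γ₁ k) := rfl
  rw [hl2] at hLbound
  linarith
end
end

section
/- Under the exponential-tilt sampling model: if (Y₁,X₁) and (Y₂,X₂) are i.i.d. pairs whose conditional law of Y given X = x has density y ↦ g(y)·exp(y·xᵀγ*)/Z(x) with respect to a σ-finite measure μ, and if E[|Y₁−Y₂|·‖X₁−X₂‖₁] < ∞, then E[(ψ'((Y₁−Y₂)·(X₁−X₂)ᵀγ*) − 1)·(Y₁−Y₂)·(X₁−X₂)] = 0 componentwise; that is, the expected gradient of the pairwise pseudo log-likelihood at the true parameter γ* is zero. -/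
open MeasureTheory ProbabilityTheory Real BigOperators Finset
open scoped ENNReal Classical

noncomputable section

lemma one_add_exp_pos (t : ℝ) : 0 < 1 + Real.exp t := by positivity

lemma psiD_nonneg (t : ℝ) : 0 ≤ psiD t :=
  div_nonneg (Real.exp_pos t).le (one_add_exp_pos t).le

lemma psiD_le_one (t : ℝ) : psiD t ≤ 1 := by
  rw [psiD, div_le_one (one_add_exp_pos t)]; linarith

lemma abs_psiD_sub_one_le (t : ℝ) : |psiD t - 1| ≤ 1 := by
  rw [abs_le]; constructor <;> nlinarith [psiD_nonneg t, psiD_le_one t]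

lemma psiD_swap (t : ℝ) : (psiD (-t) - 1) * Real.exp (-t) = psiD t - 1 := by
  have h1 := one_add_exp_pos t
  have h2 := one_add_exp_pos (-t)
  have he : Real.exp (-t) * Real.exp t = 1 := by
    rw [← Real.exp_add]; simp
  rw [psiD, psiD]
  field_simp
  nlinarith [he]

lemma dotp_sub {p : ℕ} (x₁ x₂ γ : Fin p → ℝ) :
    dotp (fun k => x₁ k - x₂ k) γ = dotp x₁ γ - dotp x₂ γ := by
  simp [dotp, sub_mul, Finset.sum_sub_distrib]

lemma measurable_dotp {p : ℕ} (γ : Fin p → ℝ) : Measurable fun x : Fin p → ℝ => dotp x γ := by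
  unfold dotp
  exact Finset.measurable_sum _ fun k _ => (measurable_pi_apply k).mul measurable_const

lemma continuous_psiD : Continuous psiD := by
  unfold psiD
  exact Real.continuous_exp.div (continuous_const.add Real.continuous_exp)
    (fun t => (one_add_exp_pos t).ne')

lemma tilt_antisymm (G₁ G₂ Z₁ Z₂ c₁ c₂ y₁ y₂ v : ℝ) :
    (G₂ * Real.exp (y₂ * c₁) / Z₁) * (G₁ * Real.exp (y₁ * c₂) / Z₂) *
      ((psiD ((y₂ - y₁) * (c₁ - c₂)) - 1) * (y₂ - y₁) * v)
    = - ((G₁ * Real.exp (y₁ * c₁) / Z₁) * (G₂ * Real.exp (y₂ * c₂) / Z₂) *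
      ((psiD ((y₁ - y₂) * (c₁ - c₂)) - 1) * (y₁ - y₂) * v)) := by
  have h3 : (y₂ - y₁) * (c₁ - c₂) = -((y₁ - y₂) * (c₁ - c₂)) := by ring
  have h1 : Real.exp (y₂ * c₁) * Real.exp (y₁ * c₂)
      = Real.exp (y₁ * c₁) * Real.exp (y₂ * c₂) * Real.exp (-((y₁ - y₂) * (c₁ - c₂))) := by
    rw [← Real.exp_add, ← Real.exp_add, ← Real.exp_add]; ring_nf
  have h2 := psiD_swap ((y₁ - y₂) * (c₁ - c₂))
  rw [h3]
  simp only [div_eq_mul_inv]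
  linear_combination (Z₁⁻¹ * Z₂⁻¹ * G₁ * G₂ * (psiD (-((y₁ - y₂) * (c₁ - c₂))) - 1) * (y₂ - y₁) * v) * h1
    + (Z₁⁻¹ * Z₂⁻¹ * G₁ * G₂ * Real.exp (y₁ * c₁) * Real.exp (y₂ * c₂) * (y₂ - y₁) * v) * h2

lemma integral_antisymm {α : Type*} [MeasurableSpace α] {μ : Measure α} [SFinite μ]
    {h : α × α → ℝ} (hm : AEStronglyMeasurable h (μ.prod μ))
    (hs : ∀ z : α × α, h z.swap = - h z) : ∫ z, h z ∂(μ.prod μ) = 0 := by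
  have h1 : ∫ z, h z ∂(μ.prod μ) = ∫ z, h (Prod.swap z) ∂(μ.prod μ) := by
    conv_lhs => rw [← Measure.prod_swap]
    exact integral_map measurable_swap.aemeasurable (by rwa [Measure.prod_swap])
  have h2 : ∫ z, h (Prod.swap z) ∂(μ.prod μ) = - ∫ z, h z ∂(μ.prod μ) := by
    simp_rw [hs]
    exact integral_neg _
  linarith

/-- under the exponential-tilt sampling model, for i.i.d. pairs
`(Y₁,X₁), (Y₂,X₂)` with `E[|Y₁−Y₂|·‖X₁−X₂‖₁] < ∞`, the expected gradient of the pairwise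
pseudo log-likelihood at the true parameter vanishes:
`E[(ψ'((Y₁−Y₂)(X₁−X₂)ᵀγ*) − 1)(Y₁−Y₂)(X₁−X₂)] = 0` componentwise. -/
theorem stmt_8 {Ω : Type*} [MeasurableSpace Ω] (P : Measure Ω) [IsProbabilityMeasure P]
    {p : ℕ} (Y₁ Y₂ : Ω → ℝ) (X₁ X₂ : Ω → Fin p → ℝ)
    (μ : Measure ℝ) [SigmaFinite μ] (g : ℝ → ℝ) (γs : Fin p → ℝ)
    (hm1 : IsTiltModel P Y₁ X₁ μ g γs) (hm2 : IsTiltModel P Y₂ X₂ μ g γs)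
    (hident : Measure.map (fun ω => (Y₁ ω, X₁ ω)) P = Measure.map (fun ω => (Y₂ ω, X₂ ω)) P)
    (hind : IndepFun (fun ω => (Y₁ ω, X₁ ω)) (fun ω => (Y₂ ω, X₂ ω)) P)
    (hint : Integrable (fun ω => |Y₁ ω - Y₂ ω| * l1norm (fun k => X₁ ω k - X₂ ω k)) P) :
    ∀ a : Fin p,
      ∫ ω, (psiD ((Y₁ ω - Y₂ ω) * dotp (fun k => X₁ ω k - X₂ ω k) γs) - 1) *
          (Y₁ ω - Y₂ ω) * (X₁ ω a - X₂ ω a) ∂P = 0 := by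
  intro a
  obtain ⟨hY₁, hX₁, hgm, hg0, hZi, hlaw₁⟩ := hm1
  obtain ⟨hY₂, hX₂, -, -, -, -⟩ := hm2
  have hcm : Measurable fun x : Fin p → ℝ => dotp x γs := measurable_dotp γs
  have hZm : Measurable fun x : Fin p → ℝ => tiltZ μ g γs x := by
    have hsm : StronglyMeasurable fun q : (Fin p → ℝ) × ℝ =>
        g q.2 * Real.exp (q.2 * dotp q.1 γs) :=
      ((hgm.comp measurable_snd).mul
        ((measurable_snd.mul (hcm.comp measurable_fst)).exp)).stronglyMeasurable
    exact hsm.integral_prod_right'.measurable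
  set r : (Fin p → ℝ) → ℝ → ℝ :=
    fun x y => g y * Real.exp (y * dotp x γs) / tiltZ μ g γs x with hrdef
  have hr0 : ∀ x y, 0 ≤ r x y := fun x y =>
    div_nonneg (mul_nonneg (hg0 y) (Real.exp_pos _).le) (hZi x).2.le
  have hrm : Measurable (Function.uncurry r) := by
    apply Measurable.div
    · exact (hgm.comp measurable_snd).mul
        ((measurable_snd.mul (hcm.comp measurable_fst)).exp)
    · exact hZm.comp measurable_fst
  have hρ1 : ∀ x, ∫⁻ y, ENNReal.ofReal (r x y) ∂μ = 1 := by
    intro x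
    rw [← ofReal_integral_eq_lintegral_ofReal ((hZi x).1.div_const _)
      (Filter.Eventually.of_forall (hr0 x))]
    rw [show (∫ y, r x y ∂μ) = (∫ y, g y * Real.exp (y * dotp x γs) ∂μ) / tiltZ μ g γs x from
      integral_div _ _]
    rw [show (∫ y, g y * Real.exp (y * dotp x γs) ∂μ) = tiltZ μ g γs x from rfl,
      div_self (hZi x).2.ne', ENNReal.ofReal_one]
  set κ : Kernel (Fin p → ℝ) ℝ :=
    Kernel.withDensity (Kernel.const _ μ) (fun x y => ENNReal.ofReal (r x y)) with hκdef
  have hρm : Measurable (Function.uncurry fun x y => ENNReal.ofReal (r x y)) :=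
    ENNReal.measurable_ofReal.comp hrm
  have hκa : ∀ x, κ x = μ.withDensity fun y => ENNReal.ofReal (r x y) := by
    intro x
    rw [hκdef, Kernel.withDensity_apply _ hρm, Kernel.const_apply]
  haveI : IsMarkovKernel κ := ⟨fun x => ⟨by
    rw [hκa x, withDensity_apply _ MeasurableSet.univ, Measure.restrict_univ, hρ1 x]⟩⟩
  set η : Kernel (Fin p → ℝ) (ℝ × (Fin p → ℝ)) := κ ×ₖ Kernel.id with hηdef
  have hηa : ∀ x, η x = Measure.map (fun y => (y, x)) (κ x) := by
    intro x
    rw [hηdef, Kernel.prod_apply, Kernel.id_apply, Measure.prod_dirac]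
  set ν : Measure (ℝ × (Fin p → ℝ)) := Measure.map (fun ω => (Y₁ ω, X₁ ω)) P with hνdef
  set m : Measure (Fin p → ℝ) := Measure.map X₁ P with hmdef
  haveI : IsProbabilityMeasure ν := Measure.isProbabilityMeasure_map (hY₁.prodMk hX₁).aemeasurable
  haveI : IsProbabilityMeasure m := Measure.isProbabilityMeasure_map hX₁.aemeasurable
  have hν : ν = m.bind fun x => η x := by
    rw [hlaw₁]
    congr 1
    funext x
    rw [hηa x, hκa x]
  have hη_set : ∀ (x : Fin p → ℝ) (u : Set (ℝ × (Fin p → ℝ))), MeasurableSet u →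
      η x u = ∫⁻ y in {y | (y, x) ∈ u}, ENNReal.ofReal (r x y) ∂μ := by
    intro x u hu
    rw [hηa x, Measure.map_apply measurable_prodMk_right hu, hκa x,
      withDensity_apply _ (measurable_prodMk_right hu)]
    rfl
  have hν_apply : ∀ u, MeasurableSet u → ν u = ∫⁻ x, η x u ∂m := by
    intro u hu
    rw [hν]
    exact Measure.bind_apply hu η.measurable.aemeasurable
  have hDm : Measurable (Function.uncurry fun (q : (Fin p → ℝ) × (Fin p → ℝ)) (z : ℝ × ℝ) =>
      ENNReal.ofReal (r q.1 z.1 * r q.2 z.2)) := by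
    apply ENNReal.measurable_ofReal.comp
    exact (hrm.comp ((measurable_fst.fst).prodMk (measurable_snd.fst))).mul
      (hrm.comp ((measurable_fst.snd).prodMk (measurable_snd.snd)))
  set K : Kernel ((Fin p → ℝ) × (Fin p → ℝ)) (ℝ × ℝ) :=
    Kernel.withDensity (Kernel.const _ (μ.prod μ))
      (fun q z => ENNReal.ofReal (r q.1 z.1 * r q.2 z.2)) with hKdef
  have hKa : ∀ q, K q = (μ.prod μ).withDensity
      (fun z => ENNReal.ofReal (r q.1 z.1 * r q.2 z.2)) := by
    intro q
    rw [hKdef, Kernel.withDensity_apply _ hDm, Kernel.const_apply]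
  have hrm1 : ∀ x : Fin p → ℝ, Measurable fun y => ENNReal.ofReal (r x y) := fun x =>
    ENNReal.measurable_ofReal.comp (hrm.comp (measurable_const.prodMk measurable_id))
  have hKsplit : ∀ (x₁ x₂ : Fin p → ℝ) (s' t' : Set ℝ), MeasurableSet s' → MeasurableSet t' →
      ∫⁻ z in s' ×ˢ t', ENNReal.ofReal (r x₁ z.1 * r x₂ z.2) ∂(μ.prod μ)
        = (∫⁻ y in s', ENNReal.ofReal (r x₁ y) ∂μ) * ∫⁻ y in t', ENNReal.ofReal (r x₂ y) ∂μ := by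
    intro x₁ x₂ s' t' hs' ht'
    have haux : ∀ u v : ℝ, ENNReal.ofReal (r x₁ u * r x₂ v)
        = ENNReal.ofReal (r x₁ u) * ENNReal.ofReal (r x₂ v) := fun u v =>
      ENNReal.ofReal_mul (hr0 x₁ u)
    rw [← Measure.prod_restrict]
    simp only [haux]
    exact MeasureTheory.lintegral_prod_mul (hrm1 x₁).aemeasurable (hrm1 x₂).aemeasurable
  haveI : IsMarkovKernel K := ⟨fun q => ⟨by
    rw [hKa q, ← Set.univ_prod_univ,
      withDensity_apply _ (MeasurableSet.univ.prod MeasurableSet.univ),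
      hKsplit q.1 q.2 _ _ MeasurableSet.univ MeasurableSet.univ,
      setLIntegral_univ, setLIntegral_univ, hρ1, hρ1, one_mul]⟩⟩
  set φ : ((Fin p → ℝ) × (Fin p → ℝ)) × ℝ × ℝ → (ℝ × (Fin p → ℝ)) × ℝ × (Fin p → ℝ) :=
    fun w => ((w.2.1, w.1.1), (w.2.2, w.1.2)) with hφdef
  have hφm : Measurable φ :=
    ((measurable_snd.fst).prodMk (measurable_fst.fst)).prodMk
      ((measurable_snd.snd).prodMk (measurable_fst.snd))
  have hprod : ν.prod ν = Measure.map φ (Measure.compProd (m.prod m) K) := by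
    apply Measure.prod_eq
    intro s t hs ht
    rw [Measure.map_apply hφm (hs.prod ht), Measure.compProd_apply (hφm (hs.prod ht))]
    have hsetm : ∀ (x : Fin p → ℝ) (u : Set (ℝ × (Fin p → ℝ))), MeasurableSet u →
        MeasurableSet {y : ℝ | (y, x) ∈ u} := fun x u hu => measurable_prodMk_right hu
    calc ∫⁻ q, K q (Prod.mk q ⁻¹' (φ ⁻¹' s ×ˢ t)) ∂(m.prod m)
        = ∫⁻ q, (η q.1 s) * (η q.2 t) ∂(m.prod m) := by
          apply lintegral_congr
          intro q
          have hsec : (Prod.mk q ⁻¹' (φ ⁻¹' s ×ˢ t))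
              = {y : ℝ | (y, q.1) ∈ s} ×ˢ {y : ℝ | (y, q.2) ∈ t} := rfl
          rw [hsec, hKa q, withDensity_apply _ ((hsetm q.1 s hs).prod (hsetm q.2 t ht)),
            hKsplit q.1 q.2 _ _ (hsetm q.1 s hs) (hsetm q.2 t ht),
            ← hη_set q.1 s hs, ← hη_set q.2 t ht]
      _ = (∫⁻ x, η x s ∂m) * ∫⁻ x, η x t ∂m :=
          MeasureTheory.lintegral_prod_mul (η.measurable_coe hs).aemeasurable
            (η.measurable_coe ht).aemeasurable
      _ = ν s * ν t := by rw [hν_apply s hs, hν_apply t ht]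
  have hpp : Measurable fun ω => ((Y₁ ω, X₁ ω), (Y₂ ω, X₂ ω)) :=
    (hY₁.prodMk hX₁).prodMk (hY₂.prodMk hX₂)
  have hjoint : Measure.map (fun ω => ((Y₁ ω, X₁ ω), (Y₂ ω, X₂ ω))) P = ν.prod ν := by
    rw [(indepFun_iff_map_prod_eq_prod_map_map (hY₁.prodMk hX₁).aemeasurable
      (hY₂.prodMk hX₂).aemeasurable).mp hind, ← hident]
  set F : (ℝ × (Fin p → ℝ)) × ℝ × (Fin p → ℝ) → ℝ := fun u =>
    (psiD ((u.1.1 - u.2.1) * dotp (fun k => u.1.2 k - u.2.2 k) γs) - 1) *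
      (u.1.1 - u.2.1) * (u.1.2 a - u.2.2 a) with hFdef
  have hFm : Measurable F := by
    have h1 : Measurable fun u : (ℝ × (Fin p → ℝ)) × ℝ × (Fin p → ℝ) =>
        dotp (fun k => u.1.2 k - u.2.2 k) γs := by
      unfold dotp
      exact Finset.measurable_sum _ fun k _ =>
        (((measurable_pi_apply k).comp measurable_fst.snd).sub
          ((measurable_pi_apply k).comp measurable_snd.snd)).mul measurable_const
    have hdy : Measurable fun u : (ℝ × (Fin p → ℝ)) × ℝ × (Fin p → ℝ) => u.1.1 - u.2.1 :=
      measurable_fst.fst.sub measurable_snd.fst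
    exact (((continuous_psiD.measurable.comp (hdy.mul h1)).sub measurable_const).mul hdy).mul
      (((measurable_pi_apply a).comp measurable_fst.snd).sub
        ((measurable_pi_apply a).comp measurable_snd.snd))
  have hFbound : ∀ ω, ‖F ((Y₁ ω, X₁ ω), (Y₂ ω, X₂ ω))‖
      ≤ ‖|Y₁ ω - Y₂ ω| * l1norm fun k => X₁ ω k - X₂ ω k‖ := by
    intro ω
    have hl1 : |X₁ ω a - X₂ ω a| ≤ l1norm fun k => X₁ ω k - X₂ ω k := by
      unfold l1norm
      exact Finset.single_le_sum (f := fun k => |X₁ ω k - X₂ ω k|)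
        (fun k _ => abs_nonneg _) (Finset.mem_univ a)
    have hl0 : (0:ℝ) ≤ l1norm fun k => X₁ ω k - X₂ ω k := le_trans (abs_nonneg _) hl1
    rw [Real.norm_eq_abs, Real.norm_eq_abs,
      abs_of_nonneg (mul_nonneg (abs_nonneg _) hl0), hFdef]
    calc |(psiD ((Y₁ ω - Y₂ ω) * dotp (fun k => X₁ ω k - X₂ ω k) γs) - 1) *
          (Y₁ ω - Y₂ ω) * (X₁ ω a - X₂ ω a)|
        = |psiD ((Y₁ ω - Y₂ ω) * dotp (fun k => X₁ ω k - X₂ ω k) γs) - 1| *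
          |Y₁ ω - Y₂ ω| * |X₁ ω a - X₂ ω a| := by rw [abs_mul, abs_mul]
      _ ≤ 1 * |Y₁ ω - Y₂ ω| * l1norm fun k => X₁ ω k - X₂ ω k := by
          exact mul_le_mul
            (mul_le_mul_of_nonneg_right (abs_psiD_sub_one_le _) (abs_nonneg _))
            hl1 (abs_nonneg _) (by positivity)
      _ = |Y₁ ω - Y₂ ω| * l1norm fun k => X₁ ω k - X₂ ω k := by rw [one_mul]
  have hFint' : Integrable (fun ω => F ((Y₁ ω, X₁ ω), (Y₂ ω, X₂ ω))) P :=
    hint.mono ((hFm.comp hpp).aestronglyMeasurable) (Filter.Eventually.of_forall hFbound)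
  have hFint : Integrable F (ν.prod ν) := by
    rw [← hjoint]
    exact (integrable_map_measure hFm.aestronglyMeasurable hpp.aemeasurable).mpr hFint'
  have hFφint : Integrable (fun w => F (φ w)) (Measure.compProd (m.prod m) K) := by
    rw [hprod] at hFint
    exact (integrable_map_measure hFm.aestronglyMeasurable hφm.aemeasurable).mp hFint
  have hNN : ∀ q : (Fin p → ℝ) × (Fin p → ℝ),
      Measurable fun z : ℝ × ℝ => (r q.1 z.1 * r q.2 z.2).toNNReal := fun q =>
    measurable_real_toNNReal.comp
      ((hrm.comp (measurable_const.prodMk measurable_fst)).mul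
        (hrm.comp (measurable_const.prodMk measurable_snd)))
  have hinner : ∀ q : (Fin p → ℝ) × (Fin p → ℝ), ∫ z, F (φ (q, z)) ∂(K q) = 0 := by
    intro q
    rw [hKa q]
    rw [show ((μ.prod μ).withDensity fun z => ENNReal.ofReal (r q.1 z.1 * r q.2 z.2))
      = (μ.prod μ).withDensity fun z => ((r q.1 z.1 * r q.2 z.2).toNNReal : ℝ≥0∞) from rfl]
    rw [integral_withDensity_eq_integral_smul (hNN q)]
    apply integral_antisymm
    · exact ((hNN q).smul
        (hFm.comp (hφm.comp (measurable_const.prodMk measurable_id)))).aestronglyMeasurable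
    · intro z
      have h1 : 0 ≤ r q.1 z.2 * r q.2 z.1 := mul_nonneg (hr0 _ _) (hr0 _ _)
      have h2 : 0 ≤ r q.1 z.1 * r q.2 z.2 := mul_nonneg (hr0 _ _) (hr0 _ _)
      simp only [NNReal.smul_def, smul_eq_mul, Prod.fst_swap, Prod.snd_swap,
        Real.coe_toNNReal _ h1, Real.coe_toNNReal _ h2, hFdef, hφdef, hrdef, dotp_sub]
      simp only [hrdef] at h1 h2; rw [Real.coe_toNNReal _ h1, Real.coe_toNNReal _ h2]
      exact tilt_antisymm (g z.1) (g z.2) (tiltZ μ g γs q.1) (tiltZ μ g γs q.2)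
        (dotp q.1 γs) (dotp q.2 γs) z.1 z.2 (q.1 a - q.2 a)
  have main : ∫ u, F u ∂(ν.prod ν) = 0 := by
    rw [hprod, integral_map hφm.aemeasurable hFm.aestronglyMeasurable]
    have h2 : ∫ w, F (φ w) ∂(Measure.compProd (m.prod m) K)
        = ∫ q, ∫ z, F (φ (q, z)) ∂(K q) ∂(m.prod m) :=
      Measure.integral_compProd hFφint
    rw [h2]
    simp [hinner]
  have hfin : ∫ u, F u ∂(ν.prod ν) = ∫ ω, F ((Y₁ ω, X₁ ω), (Y₂ ω, X₂ ω)) ∂P := by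
    rw [← hjoint]
    exact integral_map hpp.aemeasurable hFm.aestronglyMeasurable
  rw [hfin] at main
  exact main
end
end

section
/- Under the exponential-tilt sampling model: if (Y₁,X₁) and (Y₂,X₂) are i.i.d. pairs whose conditional law of Y given X = x has density y ↦ g(y)·exp(y·xᵀγ*)/Z(x) with respect to a σ-finite measure μ, and if E[|Y₁−Y₂|·‖X₁−X₂‖₁·(1 + ‖γ‖∞ + ‖γ*‖∞)] < ∞ for the relevant γ (so both expectations below are finite), then for every γ ∈ ℝ^p, E[log(1 + exp(−(Y₁−Y₂)·(X₁−X₂)ᵀγ))] ≥ E[log(1 + exp(−(Y₁−Y₂)·(X₁−X₂)ᵀγ*))]; that is, γ* is a global minimizer of the population pairwise pseudo log-likelihood γ ↦ E[log(1 + exp(−(Y₁−Y₂)·(X₁−X₂)ᵀγ))]. -/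
open MeasureTheory ProbabilityTheory Real BigOperators Finset
open scoped ENNReal Classical

noncomputable section

/-! ### Auxiliary lemmas for stmt_9 -/

section Stmt9Aux

open Real

lemma stmt9_logistic_tangent (u s : ℝ) :
    exp u * (s - u) ≤ (1 + exp u) * (log (1 + exp s) - log (1 + exp u)) := by
  set c : ℝ := exp u / (1 + exp u) with hc
  have hpu : (0:ℝ) < 1 + exp u := by positivity
  have hps : (0:ℝ) < 1 + exp s := by positivity
  have hc0 : 0 ≤ c := by positivity
  have hc1 : c ≤ 1 := by rw [hc, div_le_one hpu]; linarith [exp_pos u]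
  have hconv := convexOn_exp.2 (Set.mem_univ (s - u)) (Set.mem_univ (0:ℝ)) hc0
    (by linarith : (0:ℝ) ≤ 1 - c) (by ring)
  simp only [smul_eq_mul, mul_zero, add_zero, exp_zero, mul_one] at hconv
  have hkey : c * exp (s - u) + (1 - c) = (1 + exp s) / (1 + exp u) := by
    rw [hc, exp_sub]; field_simp; ring
  have hlog : c * (s - u) ≤ log ((1 + exp s) / (1 + exp u)) := by
    have h2 : exp (c * (s - u)) ≤ (1 + exp s) / (1 + exp u) := by
      rw [← hkey]; exact hconv
    calc c * (s - u) = log (exp (c * (s - u))) := (log_exp _).symm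
      _ ≤ log ((1 + exp s) / (1 + exp u)) := log_le_log (exp_pos _) h2
  rw [log_div (ne_of_gt hps) (ne_of_gt hpu)] at hlog
  have hcc : (1 + exp u) * (c * (s - u)) = exp u * (s - u) := by
    rw [hc]; field_simp
  calc exp u * (s - u) = (1 + exp u) * (c * (s - u)) := hcc.symm
    _ ≤ (1 + exp u) * (log (1 + exp s) - log (1 + exp u)) :=
        mul_le_mul_of_nonneg_left hlog (le_of_lt hpu)

lemma stmt9_log_one_add_exp_neg (t : ℝ) : log (1 + exp (-t)) = log (1 + exp t) - t := by
  have h : 1 + exp (-t) = (1 + exp t) * exp (-t) := by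
    rw [mul_comm, mul_add, mul_one, ← exp_add]; simp [exp_zero, add_comm]
  rw [h, log_mul (by positivity) (exp_ne_zero _), log_exp]; ring

lemma stmt9_key_pointwise (b u s : ℝ) (hb : 0 ≤ b) :
    b * exp u * log (1 + exp (-u)) + b * log (1 + exp u) ≤
      b * exp u * log (1 + exp (-s)) + b * log (1 + exp s) := by
  rw [stmt9_log_one_add_exp_neg u, stmt9_log_one_add_exp_neg s]
  nlinarith [stmt9_logistic_tangent u s, hb, exp_pos u]

lemma stmt9_log_one_add_exp_nonneg (t : ℝ) : 0 ≤ log (1 + exp t) :=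
  log_nonneg (by linarith [exp_pos t])

lemma stmt9_log_one_add_exp_le (t : ℝ) : log (1 + exp t) ≤ log 2 + |t| := by
  have h1 : exp t ≤ exp |t| := exp_le_exp.2 (le_abs_self t)
  have h2 : (1:ℝ) ≤ exp |t| := by
    rw [← exp_zero]; exact exp_le_exp.2 (abs_nonneg t)
  calc log (1 + exp t) ≤ log (2 * exp |t|) :=
        log_le_log (by positivity) (by linarith)
    _ = log 2 + |t| := by rw [log_mul (by norm_num) (exp_ne_zero _), log_exp]

lemma stmt9_linf_nonneg {p : ℕ} (v : Fin p → ℝ) : 0 ≤ linf v :=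
  Real.iSup_nonneg (fun k => abs_nonneg _)

lemma stmt9_abs_le_linf {p : ℕ} (v : Fin p → ℝ) (k : Fin p) : |v k| ≤ linf v :=
  le_ciSup (f := fun k => |v k|) (Set.Finite.bddAbove (Set.finite_range _)) k

lemma stmt9_l1norm_nonneg {p : ℕ} (v : Fin p → ℝ) : 0 ≤ l1norm v :=
  Finset.sum_nonneg fun k _ => abs_nonneg _

lemma stmt9_abs_dotp_le {p : ℕ} (v w : Fin p → ℝ) : |dotp v w| ≤ l1norm v * linf w := by
  unfold dotp l1norm
  calc |∑ k, v k * w k| ≤ ∑ k, |v k * w k| := Finset.abs_sum_le_sum_abs _ _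
    _ ≤ ∑ k, |v k| * linf w := by
        refine Finset.sum_le_sum fun k _ => ?_
        rw [abs_mul]
        exact mul_le_mul_of_nonneg_left (stmt9_abs_le_linf w k) (abs_nonneg _)
    _ = (∑ k, |v k|) * linf w := by rw [← Finset.sum_mul]

lemma stmt9_dotp_sub {p : ℕ} (x₁ x₂ w : Fin p → ℝ) :
    dotp (fun k => x₁ k - x₂ k) w = dotp x₁ w - dotp x₂ w := by
  unfold dotp; rw [← Finset.sum_sub_distrib]; exact Finset.sum_congr rfl fun k _ => by ring

lemma stmt9_dotp_measurable {p : ℕ} (w : Fin p → ℝ) :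
    Measurable fun x : Fin p → ℝ => dotp x w := by
  unfold dotp
  exact Finset.measurable_sum _ fun k _ => (measurable_pi_apply k).mul_const _

lemma stmt9_tiltZ_measurable {p : ℕ} (μ : Measure ℝ) [SigmaFinite μ] (g : ℝ → ℝ)
    (hg : Measurable g) (γs : Fin p → ℝ) : Measurable fun x => tiltZ μ g γs x := by
  have hF : StronglyMeasurable fun q : (Fin p → ℝ) × ℝ =>
      g q.2 * Real.exp (q.2 * dotp q.1 γs) := by
    refine Measurable.stronglyMeasurable ?_
    exact (hg.comp measurable_snd).mul
      ((measurable_snd.mul ((stmt9_dotp_measurable γs).comp measurable_fst)).exp)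
  exact hF.integral_prod_right'.measurable

end Stmt9Aux

set_option maxHeartbeats 1000000 in
/-- under the exponential-tilt sampling model, for i.i.d. pairs
`(Y₁,X₁), (Y₂,X₂)` and any `γ ∈ ℝ^p` such that
`E[|Y₁−Y₂|·‖X₁−X₂‖₁·(1 + ‖γ‖∞ + ‖γ*‖∞)] < ∞`, the true parameter `γ*` is a global
minimizer of the population pairwise pseudo log-likelihood:
`E[log(1+exp(−(Y₁−Y₂)(X₁−X₂)ᵀγ*))] ≤ E[log(1+exp(−(Y₁−Y₂)(X₁−X₂)ᵀγ))]`. -/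
theorem stmt_9 {Ω : Type*} [MeasurableSpace Ω] (P : Measure Ω) [IsProbabilityMeasure P]
    {p : ℕ} (Y₁ Y₂ : Ω → ℝ) (X₁ X₂ : Ω → Fin p → ℝ)
    (μ : Measure ℝ) [SigmaFinite μ] (g : ℝ → ℝ) (γs : Fin p → ℝ)
    (hm1 : IsTiltModel P Y₁ X₁ μ g γs) (hm2 : IsTiltModel P Y₂ X₂ μ g γs)
    (hident : Measure.map (fun ω => (Y₁ ω, X₁ ω)) P = Measure.map (fun ω => (Y₂ ω, X₂ ω)) P)
    (hind : IndepFun (fun ω => (Y₁ ω, X₁ ω)) (fun ω => (Y₂ ω, X₂ ω)) P)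
    (γ : Fin p → ℝ)
    (hint : Integrable (fun ω => |Y₁ ω - Y₂ ω| * l1norm (fun k => X₁ ω k - X₂ ω k) *
      (1 + linf γ + linf γs)) P) :
    ∫ ω, Real.log (1 + Real.exp (-((Y₁ ω - Y₂ ω) * dotp (fun k => X₁ ω k - X₂ ω k) γs))) ∂P
      ≤ ∫ ω, Real.log (1 + Real.exp (-((Y₁ ω - Y₂ ω) * dotp (fun k => X₁ ω k - X₂ ω k) γ))) ∂P := by
  classical
  obtain ⟨hY₁, hX₁, hgm, hg0, hZpos, hlaw1⟩ := hm1
  obtain ⟨hY₂, hX₂, -, -, -, -⟩ := hm2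
  -- conditional density and basic properties
  set w : (Fin p → ℝ) → ℝ → ℝ :=
    fun x y => g y * Real.exp (y * dotp x γs) / tiltZ μ g γs x with hwdef
  have hw0 : ∀ x y, 0 ≤ w x y := fun x y =>
    div_nonneg (mul_nonneg (hg0 y) (Real.exp_nonneg _)) (le_of_lt (hZpos x).2)
  have hZm : Measurable fun x : Fin p → ℝ => tiltZ μ g γs x := stmt9_tiltZ_measurable μ g hgm γs
  have hwm : Measurable fun q : (Fin p → ℝ) × ℝ => w q.1 q.2 :=
    ((hgm.comp measurable_snd).mul
      ((measurable_snd.mul ((stmt9_dotp_measurable γs).comp measurable_fst)).exp)).div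
      (hZm.comp measurable_fst)
  set W : (Fin p → ℝ) → ℝ → ℝ≥0∞ := fun x y => ENNReal.ofReal (w x y) with hWdef
  have hWm : Measurable fun q : (Fin p → ℝ) × ℝ => W q.1 q.2 :=
    ENNReal.measurable_ofReal.comp hwm
  -- the transition kernel
  set K : (Fin p → ℝ) → Measure (ℝ × (Fin p → ℝ)) := fun x =>
    Measure.map (fun y => (y, x)) (μ.withDensity fun y => W x y) with hKdef
  have hmk : ∀ x : Fin p → ℝ, Measurable fun y : ℝ => (y, x) := fun x =>
    measurable_id.prodMk measurable_const
  have hKm : Measurable K := by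
    apply Measure.measurable_of_measurable_coe
    intro s hs
    have hrw : ∀ x, K x s = ∫⁻ y, Set.indicator s (fun _ => (1:ℝ≥0∞)) (y, x) * W x y ∂μ := by
      intro x
      simp only [hKdef]
      rw [Measure.map_apply (hmk x) hs, withDensity_apply _ ((hmk x) hs),
        ← lintegral_indicator ((hmk x) hs)]
      refine lintegral_congr fun y => ?_
      by_cases hy : (y, x) ∈ s
      · rw [Set.indicator_of_mem hy, Set.indicator_of_mem (by exact hy), one_mul]
      · rw [Set.indicator_of_notMem hy, Set.indicator_of_notMem (by exact hy), zero_mul]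
    simp_rw [hrw]
    exact Measurable.lintegral_prod_right'
      (f := fun q : (Fin p → ℝ) × ℝ => Set.indicator s (fun _ => (1:ℝ≥0∞)) (q.2, q.1) * W q.1 q.2)
      (((measurable_const.indicator hs).comp (measurable_snd.prodMk measurable_fst)).mul hWm)
  set κ : Measure (Fin p → ℝ) := Measure.map X₁ P with hκdef
  haveI : IsProbabilityMeasure κ := Measure.isProbabilityMeasure_map hX₁.aemeasurable
  set ν : Measure (ℝ × (Fin p → ℝ)) := Measure.map (fun ω => (Y₁ ω, X₁ ω)) P with hνdef
  have hpair1 : Measurable fun ω => (Y₁ ω, X₁ ω) := hY₁.prodMk hX₁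
  have hpair2 : Measurable fun ω => (Y₂ ω, X₂ ω) := hY₂.prodMk hX₂
  haveI : IsProbabilityMeasure ν := Measure.isProbabilityMeasure_map hpair1.aemeasurable
  have hνeq : ν = κ.bind K := hlaw1
  have hprod : Measure.map (fun ω => ((Y₁ ω, X₁ ω), (Y₂ ω, X₂ ω))) P = ν.prod ν := by
    rw [(ProbabilityTheory.indepFun_iff_map_prod_eq_prod_map_map hpair1.aemeasurable
      hpair2.aemeasurable).mp hind, ← hident]
  -- expansion of an expectation as an iterated integral
  have hKint : ∀ H : (ℝ × (Fin p → ℝ)) → ℝ≥0∞, Measurable H →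
      ∫⁻ z, H z ∂ν = ∫⁻ x, ∫⁻ y, W x y * H (y, x) ∂μ ∂κ := by
    intro H hH
    rw [hνeq, Measure.lintegral_bind hKm.aemeasurable hH.aemeasurable]
    refine lintegral_congr fun x => ?_
    have hWx : Measurable fun y : ℝ => W x y := hWm.comp measurable_prodMk_left
    have hHx : Measurable fun y : ℝ => H (y, x) := hH.comp (hmk x)
    simp only [hKdef]
    rw [lintegral_map hH (hmk x)]
    exact lintegral_withDensity_eq_lintegral_mul μ hWx hHx
  have hform : ∀ G : (ℝ × (Fin p → ℝ)) × (ℝ × (Fin p → ℝ)) → ℝ≥0∞, Measurable G →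
      ∫⁻ ω, G ((Y₁ ω, X₁ ω), (Y₂ ω, X₂ ω)) ∂P
        = ∫⁻ x₁, ∫⁻ x₂, ∫⁻ y₁, ∫⁻ y₂,
            W x₁ y₁ * W x₂ y₂ * G ((y₁, x₁), (y₂, x₂)) ∂μ ∂μ ∂κ ∂κ := by
    intro G hG
    have h1 : ∫⁻ ω, G ((Y₁ ω, X₁ ω), (Y₂ ω, X₂ ω)) ∂P = ∫⁻ z, G z ∂(ν.prod ν) := by
      rw [← hprod, lintegral_map hG (hpair1.prodMk hpair2)]
    rw [h1, lintegral_prod _ hG.aemeasurable]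
    have hinner : ∀ z₁, ∫⁻ z₂, G (z₁, z₂) ∂ν
        = ∫⁻ x₂, ∫⁻ y₂, W x₂ y₂ * G (z₁, (y₂, x₂)) ∂μ ∂κ :=
      fun z₁ => hKint _ (hG.comp measurable_prodMk_left)
    have hf3 : Measurable fun r : ((ℝ × (Fin p → ℝ)) × (Fin p → ℝ)) × ℝ =>
        W r.1.2 r.2 * G (r.1.1, (r.2, r.1.2)) :=
      (hWm.comp ((measurable_fst.snd).prodMk measurable_snd)).mul
        (hG.comp ((measurable_fst.fst).prodMk (measurable_snd.prodMk measurable_fst.snd)))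
    have hf2 : Measurable fun q : (ℝ × (Fin p → ℝ)) × (Fin p → ℝ) =>
        ∫⁻ y₂, W q.2 y₂ * G (q.1, (y₂, q.2)) ∂μ := hf3.lintegral_prod_right'
    have hF : Measurable fun z₁ : ℝ × (Fin p → ℝ) =>
        ∫⁻ x₂, ∫⁻ y₂, W x₂ y₂ * G (z₁, (y₂, x₂)) ∂μ ∂κ := hf2.lintegral_prod_right'
    calc ∫⁻ z₁, ∫⁻ z₂, G (z₁, z₂) ∂ν ∂ν
        = ∫⁻ z₁, (∫⁻ x₂, ∫⁻ y₂, W x₂ y₂ * G (z₁, (y₂, x₂)) ∂μ ∂κ) ∂ν :=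
          lintegral_congr hinner
      _ = ∫⁻ x₁, ∫⁻ y₁, W x₁ y₁ *
            (∫⁻ x₂, ∫⁻ y₂, W x₂ y₂ * G ((y₁, x₁), (y₂, x₂)) ∂μ ∂κ) ∂μ ∂κ := hKint _ hF
      _ = ∫⁻ x₁, ∫⁻ x₂, ∫⁻ y₁, ∫⁻ y₂,
            W x₁ y₁ * W x₂ y₂ * G ((y₁, x₁), (y₂, x₂)) ∂μ ∂μ ∂κ ∂κ := by
          refine lintegral_congr fun x₁ => ?_
          calc ∫⁻ y₁, W x₁ y₁ * (∫⁻ x₂, ∫⁻ y₂, W x₂ y₂ * G ((y₁, x₁), (y₂, x₂)) ∂μ ∂κ) ∂μ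
              = ∫⁻ y₁, ∫⁻ x₂, W x₁ y₁ * ∫⁻ y₂, W x₂ y₂ * G ((y₁, x₁), (y₂, x₂)) ∂μ ∂κ ∂μ := by
                refine lintegral_congr fun y₁ => ?_
                have hmx : Measurable fun x₂ : Fin p → ℝ =>
                    ∫⁻ y₂, W x₂ y₂ * G ((y₁, x₁), (y₂, x₂)) ∂μ :=
                  Measurable.lintegral_prod_right'
                    (f := fun q : (Fin p → ℝ) × ℝ => W q.1 q.2 * G ((y₁, x₁), (q.2, q.1)))
                    (hWm.mul (hG.comp (measurable_const.prodMk
                      (measurable_snd.prodMk measurable_fst))))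
                rw [← lintegral_const_mul _ hmx]
            _ = ∫⁻ x₂, ∫⁻ y₁, W x₁ y₁ * (∫⁻ y₂, W x₂ y₂ * G ((y₁, x₁), (y₂, x₂)) ∂μ) ∂μ ∂κ := by
                refine lintegral_lintegral_swap ?_
                refine Measurable.aemeasurable ?_
                have hin : Measurable fun q : (ℝ × (Fin p → ℝ)) × ℝ =>
                    W q.1.2 q.2 * G ((q.1.1, x₁), (q.2, q.1.2)) :=
                  (hWm.comp ((measurable_fst.snd).prodMk measurable_snd)).mul
                    (hG.comp (((measurable_fst.fst).prodMk measurable_const).prodMk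
                      (measurable_snd.prodMk measurable_fst.snd)))
                exact (hWm.comp (measurable_const.prodMk measurable_fst)).mul
                  (Measurable.lintegral_prod_right'
                    (f := fun q : (ℝ × (Fin p → ℝ)) × ℝ =>
                      W q.1.2 q.2 * G ((q.1.1, x₁), (q.2, q.1.2))) hin)
            _ = ∫⁻ x₂, ∫⁻ y₁, ∫⁻ y₂,
                  W x₁ y₁ * W x₂ y₂ * G ((y₁, x₁), (y₂, x₂)) ∂μ ∂μ ∂κ := by
                refine lintegral_congr fun x₂ => lintegral_congr fun y₁ => ?_
                have hmy : Measurable fun y₂ : ℝ => W x₂ y₂ * G ((y₁, x₁), (y₂, x₂)) :=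
                  (hWm.comp (measurable_const.prodMk measurable_id)).mul
                    (hG.comp (measurable_const.prodMk
                      (measurable_id.prodMk measurable_const)))
                rw [← lintegral_const_mul _ hmy]
                refine lintegral_congr fun y₂ => ?_
                rw [mul_assoc]
  -- the two loss integrands in ℝ≥0∞
  set Gf : (Fin p → ℝ) → (ℝ × (Fin p → ℝ)) × (ℝ × (Fin p → ℝ)) → ℝ≥0∞ := fun γ' z =>
    ENNReal.ofReal (Real.log (1 + Real.exp
      (-((z.1.1 - z.2.1) * dotp (fun k => z.1.2 k - z.2.2 k) γ')))) with hGfdef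
  have hGm : ∀ γ' : Fin p → ℝ, Measurable (Gf γ') := by
    intro γ'
    simp only [hGfdef]
    apply ENNReal.measurable_ofReal.comp
    apply Measurable.log
    apply measurable_const.add
    apply Measurable.exp
    apply Measurable.neg
    refine (measurable_fst.fst.sub measurable_snd.fst).mul ?_
    unfold dotp
    exact Finset.measurable_sum _ fun k _ =>
      (((measurable_pi_apply k).comp measurable_fst.snd).sub
        ((measurable_pi_apply k).comp measurable_snd.snd)).mul_const _
  -- pointwise key inequality on the symmetrized integrand
  have hpt : ∀ (x₁ x₂ : Fin p → ℝ) (y₁ y₂ : ℝ),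
      W x₁ y₁ * W x₂ y₂ * Gf γs ((y₁, x₁), (y₂, x₂))
        + W x₁ y₂ * W x₂ y₁ * Gf γs ((y₂, x₁), (y₁, x₂))
      ≤ W x₁ y₁ * W x₂ y₂ * Gf γ ((y₁, x₁), (y₂, x₂))
        + W x₁ y₂ * W x₂ y₁ * Gf γ ((y₂, x₁), (y₁, x₂)) := by
    intro x₁ x₂ y₁ y₂
    have hneg : ∀ γ' : Fin p → ℝ,
        -((y₂ - y₁) * dotp (fun k => x₁ k - x₂ k) γ')
          = (y₁ - y₂) * dotp (fun k => x₁ k - x₂ k) γ' := fun γ' => by ring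
    simp only [hGfdef, hWdef, hneg]
    set u := (y₁ - y₂) * dotp (fun k => x₁ k - x₂ k) γs with hu
    set t := (y₁ - y₂) * dotp (fun k => x₁ k - x₂ k) γ with ht
    have hun : -u = -u := rfl
    have hexpu : Real.exp u ≥ 0 := Real.exp_nonneg u
    have hb0 : 0 ≤ w x₁ y₂ * w x₂ y₁ := mul_nonneg (hw0 _ _) (hw0 _ _)
    have ha0 : 0 ≤ w x₁ y₁ * w x₂ y₂ := mul_nonneg (hw0 _ _) (hw0 _ _)
    have hZ1 : tiltZ μ g γs x₁ ≠ 0 := ne_of_gt (hZpos x₁).2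
    have hZ2 : tiltZ μ g γs x₂ ≠ 0 := ne_of_gt (hZpos x₂).2
    have hu2 : u = y₁ * dotp x₁ γs + y₂ * dotp x₂ γs
        - (y₂ * dotp x₁ γs + y₁ * dotp x₂ γs) := by
      rw [hu, stmt9_dotp_sub]; ring
    have hexp : Real.exp (y₂ * dotp x₁ γs) * Real.exp (y₁ * dotp x₂ γs) * Real.exp u
        = Real.exp (y₁ * dotp x₁ γs) * Real.exp (y₂ * dotp x₂ γs) := by
      rw [← Real.exp_add, ← Real.exp_add, ← Real.exp_add]
      congr 1
      linarith [hu2]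
    have hident2 : w x₁ y₁ * w x₂ y₂ = w x₁ y₂ * w x₂ y₁ * Real.exp u := by
      simp only [hwdef]
      field_simp
      rw [mul_comm (dotp x₁ γs) y₂]
      linear_combination g y₁ * g y₂ * hexp.symm
    rw [← ENNReal.ofReal_mul (hw0 x₁ y₁), ← ENNReal.ofReal_mul (hw0 x₁ y₂),
      ← ENNReal.ofReal_mul ha0, ← ENNReal.ofReal_mul ha0,
      ← ENNReal.ofReal_mul hb0, ← ENNReal.ofReal_mul hb0,
      ← ENNReal.ofReal_add (mul_nonneg ha0 (stmt9_log_one_add_exp_nonneg _))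
        (mul_nonneg hb0 (stmt9_log_one_add_exp_nonneg _)),
      ← ENNReal.ofReal_add (mul_nonneg ha0 (stmt9_log_one_add_exp_nonneg _))
        (mul_nonneg hb0 (stmt9_log_one_add_exp_nonneg _))]
    apply ENNReal.ofReal_le_ofReal
    rw [hident2]
    exact stmt9_key_pointwise (w x₁ y₂ * w x₂ y₁) u t hb0
  -- key comparison of inner double integrals
  have hkey : ∀ x₁ x₂ : Fin p → ℝ,
      (∫⁻ y₁, ∫⁻ y₂, W x₁ y₁ * W x₂ y₂ * Gf γs ((y₁, x₁), (y₂, x₂)) ∂μ ∂μ)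
        ≤ ∫⁻ y₁, ∫⁻ y₂, W x₁ y₁ * W x₂ y₂ * Gf γ ((y₁, x₁), (y₂, x₂)) ∂μ ∂μ := by
    intro x₁ x₂
    have hun : ∀ γ' : Fin p → ℝ, Measurable (Function.uncurry fun y₁ y₂ : ℝ =>
        W x₁ y₁ * W x₂ y₂ * Gf γ' ((y₁, x₁), (y₂, x₂))) := by
      intro γ'
      exact ((hWm.comp (measurable_const.prodMk measurable_fst)).mul
        (hWm.comp (measurable_const.prodMk measurable_snd))).mul
        ((hGm γ').comp ((measurable_fst.prodMk measurable_const).prodMk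
          (measurable_snd.prodMk measurable_const)))
    have hun' : ∀ γ' : Fin p → ℝ, Measurable (fun q : ℝ × ℝ =>
        W x₁ q.2 * W x₂ q.1 * Gf γ' ((q.2, x₁), (q.1, x₂))) := by
      intro γ'
      exact ((hWm.comp (measurable_const.prodMk measurable_snd)).mul
        (hWm.comp (measurable_const.prodMk measurable_fst))).mul
        ((hGm γ').comp ((measurable_snd.prodMk measurable_const).prodMk
          (measurable_fst.prodMk measurable_const)))
    have hswap : ∀ γ' : Fin p → ℝ,
        (∫⁻ y₁, ∫⁻ y₂, W x₁ y₁ * W x₂ y₂ * Gf γ' ((y₁, x₁), (y₂, x₂)) ∂μ ∂μ)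
          = ∫⁻ y₁, ∫⁻ y₂, W x₁ y₂ * W x₂ y₁ * Gf γ' ((y₂, x₁), (y₁, x₂)) ∂μ ∂μ :=
      fun γ' => lintegral_lintegral_swap ((hun γ').aemeasurable)
    have hdouble : ∀ γ' : Fin p → ℝ,
        (∫⁻ y₁, ∫⁻ y₂, (W x₁ y₁ * W x₂ y₂ * Gf γ' ((y₁, x₁), (y₂, x₂))
            + W x₁ y₂ * W x₂ y₁ * Gf γ' ((y₂, x₁), (y₁, x₂))) ∂μ ∂μ)
          = 2 * ∫⁻ y₁, ∫⁻ y₂, W x₁ y₁ * W x₂ y₂ * Gf γ' ((y₁, x₁), (y₂, x₂)) ∂μ ∂μ := by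
      intro γ'
      have e1 : ∀ y₁ : ℝ,
          (∫⁻ y₂, (W x₁ y₁ * W x₂ y₂ * Gf γ' ((y₁, x₁), (y₂, x₂))
            + W x₁ y₂ * W x₂ y₁ * Gf γ' ((y₂, x₁), (y₁, x₂))) ∂μ)
          = (∫⁻ y₂, W x₁ y₁ * W x₂ y₂ * Gf γ' ((y₁, x₁), (y₂, x₂)) ∂μ)
            + ∫⁻ y₂, W x₁ y₂ * W x₂ y₁ * Gf γ' ((y₂, x₁), (y₁, x₂)) ∂μ := by
        intro y₁
        have hA : Measurable fun y₂ : ℝ =>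
            W x₁ y₁ * W x₂ y₂ * Gf γ' ((y₁, x₁), (y₂, x₂)) :=
          (hun γ').comp (measurable_const.prodMk measurable_id)
        exact lintegral_add_left hA _
      have hIA : Measurable fun y₁ : ℝ =>
          ∫⁻ y₂, W x₁ y₁ * W x₂ y₂ * Gf γ' ((y₁, x₁), (y₂, x₂)) ∂μ :=
        (hun γ').lintegral_prod_right'
      rw [lintegral_congr e1, lintegral_add_left hIA, ← hswap γ', two_mul]
    have hle : (2:ℝ≥0∞) * (∫⁻ y₁, ∫⁻ y₂, W x₁ y₁ * W x₂ y₂ * Gf γs ((y₁, x₁), (y₂, x₂)) ∂μ ∂μ)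
        ≤ 2 * ∫⁻ y₁, ∫⁻ y₂, W x₁ y₁ * W x₂ y₂ * Gf γ ((y₁, x₁), (y₂, x₂)) ∂μ ∂μ := by
      rw [← hdouble γs, ← hdouble γ]
      exact lintegral_mono fun y₁ => lintegral_mono fun y₂ => hpt x₁ x₂ y₁ y₂
    exact (ENNReal.mul_le_mul_iff_right (by norm_num) (by norm_num)).mp hle
  -- measurability of the real-valued losses
  have hsm : ∀ γ' : Fin p → ℝ, Measurable fun ω =>
      Real.log (1 + Real.exp (-((Y₁ ω - Y₂ ω) * dotp (fun k => X₁ ω k - X₂ ω k) γ'))) := by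
    intro γ'
    have hd : Measurable fun ω => dotp (fun k => X₁ ω k - X₂ ω k) γ' := by
      unfold dotp
      exact Finset.measurable_sum _ fun k _ =>
        (((measurable_pi_apply k).comp hX₁).sub ((measurable_pi_apply k).comp hX₂)).mul_const _
    exact (measurable_const.add ((hY₁.sub hY₂).mul hd).neg.exp).log
  -- integrability of both losses
  have hintb : ∀ γ' : Fin p → ℝ, linf γ' ≤ 1 + linf γ + linf γs →
      Integrable (fun ω => Real.log (1 + Real.exp
        (-((Y₁ ω - Y₂ ω) * dotp (fun k => X₁ ω k - X₂ ω k) γ')))) P := by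
    intro γ' hγ'
    refine Integrable.mono' ((integrable_const (Real.log 2)).add hint)
      (hsm γ').aestronglyMeasurable (Filter.Eventually.of_forall fun ω => ?_)
    rw [Real.norm_eq_abs, abs_of_nonneg (stmt9_log_one_add_exp_nonneg _)]
    have h1 := stmt9_log_one_add_exp_le
      (-((Y₁ ω - Y₂ ω) * dotp (fun k => X₁ ω k - X₂ ω k) γ'))
    have h2 : |(-((Y₁ ω - Y₂ ω) * dotp (fun k => X₁ ω k - X₂ ω k) γ'))|
        ≤ |Y₁ ω - Y₂ ω| * l1norm (fun k => X₁ ω k - X₂ ω k) * (1 + linf γ + linf γs) := by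
      rw [abs_neg, abs_mul]
      calc |Y₁ ω - Y₂ ω| * |dotp (fun k => X₁ ω k - X₂ ω k) γ'|
          ≤ |Y₁ ω - Y₂ ω| * (l1norm (fun k => X₁ ω k - X₂ ω k) * linf γ') :=
            mul_le_mul_of_nonneg_left (stmt9_abs_dotp_le _ _) (abs_nonneg _)
        _ ≤ |Y₁ ω - Y₂ ω| * (l1norm (fun k => X₁ ω k - X₂ ω k) * (1 + linf γ + linf γs)) := by
            refine mul_le_mul_of_nonneg_left ?_ (abs_nonneg _)
            exact mul_le_mul_of_nonneg_left hγ' (stmt9_l1norm_nonneg _)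
        _ = |Y₁ ω - Y₂ ω| * l1norm (fun k => X₁ ω k - X₂ ω k) * (1 + linf γ + linf γs) := by
            ring
    simpa using le_trans h1 (by linarith)
  have hintγ : Integrable (fun ω => Real.log (1 + Real.exp
      (-((Y₁ ω - Y₂ ω) * dotp (fun k => X₁ ω k - X₂ ω k) γ)))) P :=
    hintb γ (by linarith [stmt9_linf_nonneg γs, stmt9_linf_nonneg γ])
  -- conversion to lintegrals
  rw [integral_eq_lintegral_of_nonneg_ae
      (Filter.Eventually.of_forall fun ω => stmt9_log_one_add_exp_nonneg _)
      (hsm γs).aestronglyMeasurable,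
    integral_eq_lintegral_of_nonneg_ae
      (Filter.Eventually.of_forall fun ω => stmt9_log_one_add_exp_nonneg _)
      (hsm γ).aestronglyMeasurable]
  have hTop : (∫⁻ ω, ENNReal.ofReal (Real.log (1 + Real.exp
      (-((Y₁ ω - Y₂ ω) * dotp (fun k => X₁ ω k - X₂ ω k) γ)))) ∂P) ≠ ⊤ := by
    refine ne_top_of_le_ne_top hintγ.2.ne (lintegral_mono fun ω => ?_)
    rw [Real.enorm_eq_ofReal_abs]
    exact ENNReal.ofReal_le_ofReal (le_abs_self _)
  refine ENNReal.toReal_mono hTop ?_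
  have e1 := hform (Gf γs) (hGm γs)
  have e2 := hform (Gf γ) (hGm γ)
  simp only [hGfdef] at e1 e2
  calc ∫⁻ ω, ENNReal.ofReal (Real.log (1 + Real.exp
        (-((Y₁ ω - Y₂ ω) * dotp (fun k => X₁ ω k - X₂ ω k) γs)))) ∂P
      = ∫⁻ x₁, ∫⁻ x₂, ∫⁻ y₁, ∫⁻ y₂,
          W x₁ y₁ * W x₂ y₂ * Gf γs ((y₁, x₁), (y₂, x₂)) ∂μ ∂μ ∂κ ∂κ := by
        simpa only [hGfdef] using e1
    _ ≤ ∫⁻ x₁, ∫⁻ x₂, ∫⁻ y₁, ∫⁻ y₂,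
          W x₁ y₁ * W x₂ y₂ * Gf γ ((y₁, x₁), (y₂, x₂)) ∂μ ∂μ ∂κ ∂κ :=
        lintegral_mono fun x₁ => lintegral_mono fun x₂ => hkey x₁ x₂
    _ = ∫⁻ ω, ENNReal.ofReal (Real.log (1 + Real.exp
          (-((Y₁ ω - Y₂ ω) * dotp (fun k => X₁ ω k - X₂ ω k) γ)))) ∂P := by
        simpa only [hGfdef] using e2.symm
end
end
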